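/- arXiv:1912.00049 — 9 statements merged into one kernel-verified Lean document; each statement's English description precedes it below -/
import Mathlib

section
/- Let ε > 0, let c ≥ 1 be a number of channels and let ν_old : P × Fin c → ℝ be a perturbation indexed by a finite set of pixels P and channels, with ‖ν_old‖₂ ≤ ε. Let W₁, W₂ ⊆ P be disjoint sets of pixels, and set ε_unused² = ε² − ‖ν_old‖₂². Suppose ν : P × Fin c → ℝ satisfies: (i) ν agrees with ν_old on all pixels outside W₁ ∪ W₂ (in every channel); (ii) ν vanishes on W₂ (in every channel); (iii) for every channel i, the squared ℓ₂-norm of the restriction of ν to W₁ × {i} equals the squared ℓ₂-norm of the restriction of ν_old to (W₁ ∪ W₂) × {i} plus ε_unused²/c. Then ‖ν‖₂ = ε. -/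
open Finset

/-- Proposition 1 (correctness of the `l₂`-Square Attack update): if the new perturbation `ν`
agrees with `ν_old` outside `W₁ ∪ W₂`, vanishes on `W₂`, and in each channel the squared norm
on `W₁` equals the squared norm of `ν_old` on `W₁ ∪ W₂` plus `ε_unused²/c`, then `‖ν‖₂ = ε`. -/
theorem square_attack_l2_update_norm
    (P : Type*) [Fintype P] [DecidableEq P] (c : ℕ) (hc : 1 ≤ c)
    (ε : ℝ) (hε : 0 < ε)
    (νold ν : P × Fin c → ℝ)
    (hold : Real.sqrt (∑ p : P, ∑ i : Fin c, (νold (p, i)) ^ 2) ≤ ε)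
    (W₁ W₂ : Finset P) (hdisj : Disjoint W₁ W₂)
    (hagree : ∀ p : P, p ∉ W₁ ∪ W₂ → ∀ i : Fin c, ν (p, i) = νold (p, i))
    (hzero : ∀ p ∈ W₂, ∀ i : Fin c, ν (p, i) = 0)
    (hnorm : ∀ i : Fin c,
      ∑ p ∈ W₁, (ν (p, i)) ^ 2 =
        ∑ p ∈ W₁ ∪ W₂, (νold (p, i)) ^ 2 +
          (ε ^ 2 - ∑ p : P, ∑ j : Fin c, (νold (p, j)) ^ 2) / c) :
    Real.sqrt (∑ p : P, ∑ i : Fin c, (ν (p, i)) ^ 2) = ε := by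
  set S : ℝ := ∑ p : P, ∑ j : Fin c, (νold (p, j)) ^ 2 with hS
  have hc0 : (c : ℝ) ≠ 0 := Nat.cast_ne_zero.mpr (by omega)
  have hsplitν : ∑ p ∈ (W₁ ∪ W₂), ∑ i : Fin c, (ν (p, i)) ^ 2 +
      ∑ p ∈ (W₁ ∪ W₂)ᶜ, ∑ i : Fin c, (ν (p, i)) ^ 2 =
      ∑ p : P, ∑ i : Fin c, (ν (p, i)) ^ 2 :=
    Finset.sum_add_sum_compl _ _
  have hsplitold : ∑ p ∈ (W₁ ∪ W₂), ∑ i : Fin c, (νold (p, i)) ^ 2 +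
      ∑ p ∈ (W₁ ∪ W₂)ᶜ, ∑ i : Fin c, (νold (p, i)) ^ 2 = S :=
    Finset.sum_add_sum_compl _ _
  have hcompl : ∑ p ∈ (W₁ ∪ W₂)ᶜ, ∑ i : Fin c, (ν (p, i)) ^ 2 =
      ∑ p ∈ (W₁ ∪ W₂)ᶜ, ∑ i : Fin c, (νold (p, i)) ^ 2 := by
    refine Finset.sum_congr rfl fun p hp => Finset.sum_congr rfl fun i _ => ?_
    rw [hagree p (Finset.mem_compl.mp hp) i]
  have hW2 : ∑ p ∈ W₂, ∑ i : Fin c, (ν (p, i)) ^ 2 = 0 := by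
    refine Finset.sum_eq_zero fun p hp => Finset.sum_eq_zero fun i _ => ?_
    rw [hzero p hp i]; ring
  have hU : ∑ p ∈ (W₁ ∪ W₂), ∑ i : Fin c, (ν (p, i)) ^ 2 =
      ∑ p ∈ (W₁ ∪ W₂), ∑ i : Fin c, (νold (p, i)) ^ 2 + (ε ^ 2 - S) := by
    rw [Finset.sum_union hdisj, hW2, add_zero, Finset.sum_comm]
    have : ∑ i : Fin c, ∑ p ∈ W₁, (ν (p, i)) ^ 2 =
        ∑ i : Fin c, (∑ p ∈ (W₁ ∪ W₂), (νold (p, i)) ^ 2 + (ε ^ 2 - S) / c) :=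
      Finset.sum_congr rfl fun i _ => hnorm i
    rw [this, Finset.sum_add_distrib, Finset.sum_const, Finset.card_fin, nsmul_eq_mul,
      mul_div_cancel₀ _ hc0, Finset.sum_comm]
  have htot : ∑ p : P, ∑ i : Fin c, (ν (p, i)) ^ 2 = ε ^ 2 := by
    rw [← hsplitν, hcompl, hU]
    have := hsplitold
    linarith
  rw [htot, Real.sqrt_sq hε.le]
end

section
/- Let g : ℝ^d → ℝ be differentiable with L-Lipschitz gradient (L-smooth), let T ≥ 1 be an integer, γ > 0, C > 0, C̃ > 0, and set γ_t = γ/√T for all t. On a probability space let δ_0, …, δ_T be independent random vectors in ℝ^d, let x_0 ∈ ℝ^d be deterministic, and define recursively x_{t+1} = x_t + δ_t if g(x_t + δ_t) < g(x_t) and x_{t+1} = x_t otherwise. Assume for every t: E[δ_t] = 0, E[‖δ_t‖₂²] ≤ γ_t² C, E[|⟨δ_t, v⟩|] ≥ C̃ γ_t ‖v‖₂ for every fixed v ∈ ℝ^d, and that g(x_t), ‖∇g(x_t)‖₂ and ‖δ_t‖₂² are integrable. Then min_{t = 0,…,T} E[‖∇g(x_t)‖₂] ≤ (2/(γ C̃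 √T)) · ( g(x_0) − E[g(x_{T+1})] + γ² C L / 2 ). -/
open MeasureTheory ProbabilityTheory Finset
open scoped RealInnerProductSpace

theorem descent_lemma {E : Type*} [NormedAddCommGroup E] [InnerProductSpace ℝ E]
    [CompleteSpace E]
    (L : ℝ) (hL : 0 ≤ L) (g : E → ℝ) (hg : Differentiable ℝ g)
    (hlip : ∀ a b : E, ‖gradient g a - gradient g b‖ ≤ L * ‖a - b‖)
    (x v : E) : g (x + v) ≤ g x + ⟪gradient g x, v⟫ + L / 2 * ‖v‖ ^ 2 := by
  have gradcont : Continuous (gradient g) := by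
    have : LipschitzWith L.toNNReal (gradient g) :=
      LipschitzWith.of_dist_le_mul fun a b => by
        simpa [dist_eq_norm, Real.coe_toNNReal L hL] using hlip a b
    exact this.continuous
  have hfderiv : ∀ y : E, fderiv ℝ g y = InnerProductSpace.toDual ℝ E (gradient g y) :=
    fun y => ((hg y).hasGradientAt.hasFDerivAt).fderiv
  set φ : ℝ → ℝ := fun s => g (x + s • v) with hφ
  have hderiv : ∀ s : ℝ, HasDerivAt φ ⟪gradient g (x + s • v), v⟫ s := by
    intro s
    have hc : HasDerivAt (fun s : ℝ => x + s • v) v s := by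
      simpa using ((hasDerivAt_id s).smul_const v).const_add x
    have := (hg (x + s • v)).hasFDerivAt.comp_hasDerivAt s hc
    rw [hfderiv, InnerProductSpace.toDual_apply_apply] at this
    exact this
  have hcontderiv : Continuous fun s : ℝ => ⟪gradient g (x + s • v), v⟫ := by
    exact (gradcont.comp (by continuity)).inner continuous_const
  have hkey : φ 1 - φ 0 = ∫ s in (0:ℝ)..1, ⟪gradient g (x + s • v), v⟫ :=
    (intervalIntegral.integral_eq_sub_of_hasDerivAt (fun s _ => hderiv s)
      (hcontderiv.intervalIntegrable 0 1)).symm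
  have hbound : ∀ s ∈ Set.Icc (0:ℝ) 1,
      ⟪gradient g (x + s • v), v⟫ ≤ ⟪gradient g x, v⟫ + L * s * ‖v‖ ^ 2 := by
    intro s hs
    have h1 : ⟪gradient g (x + s • v) - gradient g x, v⟫ ≤ L * s * ‖v‖ ^ 2 := by
      calc ⟪gradient g (x + s • v) - gradient g x, v⟫
          ≤ ‖gradient g (x + s • v) - gradient g x‖ * ‖v‖ :=
            real_inner_le_norm _ _
        _ ≤ (L * ‖(x + s • v) - x‖) * ‖v‖ := by
            have := hlip (x + s • v) x
            exact mul_le_mul_of_nonneg_right this (norm_nonneg v)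
        _ = L * s * ‖v‖ ^ 2 := by
            rw [add_sub_cancel_left, norm_smul, Real.norm_eq_abs,
              abs_of_nonneg hs.1]
            ring
    have := inner_sub_left (𝕜 := ℝ) (gradient g (x + s • v)) (gradient g x) v
    linarith [h1, this.symm ▸ h1]
  have hint : ∫ s in (0:ℝ)..1, ⟪gradient g (x + s • v), v⟫ ≤
      ∫ s in (0:ℝ)..1, (⟪gradient g x, v⟫ + L * s * ‖v‖ ^ 2) := by
    apply intervalIntegral.integral_mono_on (by norm_num)
      (hcontderiv.intervalIntegrable 0 1)
      ((by continuity : Continuous fun s : ℝ => ⟪gradient g x, v⟫ + L * s * ‖v‖ ^ 2).intervalIntegrable 0 1)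
    exact hbound
  have hval : ∫ s in (0:ℝ)..1, (⟪gradient g x, v⟫ + L * s * ‖v‖ ^ 2) =
      ⟪gradient g x, v⟫ + L / 2 * ‖v‖ ^ 2 := by
    rw [intervalIntegral.integral_add (intervalIntegrable_const)
      (Continuous.intervalIntegrable (by continuity) 0 1)]
    simp only [intervalIntegral.integral_const, smul_eq_mul]
    have : ∫ s in (0:ℝ)..1, L * s * ‖v‖ ^ 2 = L / 2 * ‖v‖ ^ 2 := by
      have : (fun s : ℝ => L * s * ‖v‖ ^ 2) = fun s : ℝ => (L * ‖v‖ ^ 2) * s := by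
        funext s; ring
      rw [this, intervalIntegral.integral_const_mul, integral_id]
      ring
    rw [this]; ring
  have h01 : φ 1 - φ 0 ≤ ⟪gradient g x, v⟫ + L / 2 * ‖v‖ ^ 2 := by
    rw [hkey]; exact hint.trans (le_of_eq hval)
  have : φ 1 = g (x + v) := by simp [hφ]
  have h0 : φ 0 = g x := by simp [hφ]
  linarith [h01, this ▸ h01]

/-- Proposition 2: convergence of the random search scheme underlying the Square Attack.
For an `L`-smooth `g`, independent zero-mean random updates `δ_0, …, δ_T` with
`E‖δ_t‖² ≤ γ_t² C` and `E|⟨δ_t, v⟩| ≥ C̃ γ_t ‖v‖` for every fixed `v`, where `γ_t = γ/√T`,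
and the accept-only-if-improving iteration `x_{t+1} = x_t + δ_t` if `g(x_t + δ_t) < g(x_t)`
else `x_t`, we have
`min_{t=0..T} E‖∇g(x_t)‖ ≤ (2/(γ C̃ √T)) (g(x_0) − E g(x_{T+1}) + γ² C L / 2)`. -/
theorem random_search_convergence
    (d : ℕ) (L γ C Ct : ℝ) (hL : 0 ≤ L) (hγ : 0 < γ) (hC : 0 < C) (hCt : 0 < Ct)
    (T : ℕ) (hT : 1 ≤ T)
    (g : EuclideanSpace ℝ (Fin d) → ℝ)
    (hg : Differentiable ℝ g)
    (hlip : ∀ a b : EuclideanSpace ℝ (Fin d),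
      ‖gradient g a - gradient g b‖ ≤ L * ‖a - b‖)
    {Ω : Type*} [MeasurableSpace Ω] (μ : Measure Ω) [IsProbabilityMeasure μ]
    (δ : Fin (T + 1) → Ω → EuclideanSpace ℝ (Fin d))
    (hδmeas : ∀ t, Measurable (δ t))
    (hindep : iIndepFun δ μ)
    (x0 : EuclideanSpace ℝ (Fin d))
    (x : ℕ → Ω → EuclideanSpace ℝ (Fin d))
    (hx0 : ∀ ω, x 0 ω = x0)
    (hxrec : ∀ t : Fin (T + 1), ∀ ω,
      x ((t : ℕ) + 1) ω =
        if g (x t ω + δ t ω) < g (x t ω) then x t ω + δ t ω else x t ω)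
    (hmean : ∀ t, ∫ ω, δ t ω ∂μ = 0)
    (hvar : ∀ t, ∫ ω, ‖δ t ω‖ ^ 2 ∂μ ≤ (γ / Real.sqrt T) ^ 2 * C)
    (hip : ∀ t, ∀ v : EuclideanSpace ℝ (Fin d),
      ∫ ω, |⟪δ t ω, v⟫| ∂μ ≥ Ct * (γ / Real.sqrt T) * ‖v‖)
    (hint_g : ∀ t ≤ T + 1, Integrable (fun ω => g (x t ω)) μ)
    (hint_grad : ∀ t ≤ T, Integrable (fun ω => ‖gradient g (x t ω)‖) μ)
    (hint_δ : ∀ t, Integrable (fun ω => ‖δ t ω‖ ^ 2) μ) :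
    (Finset.range (T + 1)).inf' (by simp)
        (fun t => ∫ ω, ‖gradient g (x t ω)‖ ∂μ) ≤
      2 / (γ * Ct * Real.sqrt T) *
        (g x0 - (∫ ω, g (x (T + 1) ω) ∂μ) + γ ^ 2 * C * L / 2) := by
  classical
  have hTpos : (0:ℝ) < T := by exact_mod_cast hT
  have hsT : 0 < Real.sqrt T := Real.sqrt_pos.mpr hTpos
  set γs : ℝ := γ / Real.sqrt T with hγs_def
  have hγs : 0 < γs := div_pos hγ hsT
  have gcont : Continuous g := hg.continuous
  have gradcont : Continuous (gradient g) := by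
    have : LipschitzWith L.toNNReal (gradient g) :=
      LipschitzWith.of_dist_le_mul fun a b => by
        simpa [dist_eq_norm, Real.coe_toNNReal L hL] using hlip a b
    exact this.continuous
  -- measurability of the iterates
  have hxmeas : ∀ t, t ≤ T + 1 → Measurable (x t) := by
    intro t
    induction t with
    | zero =>
      intro _
      have : x 0 = fun _ => x0 := funext hx0
      rw [this]; exact measurable_const
    | succ n ih =>
      intro h
      have hnT : n < T + 1 := by omega
      have ihm := ih (by omega)
      have hx' : x (n+1) = fun ω =>
          if g (x n ω + δ ⟨n, hnT⟩ ω) < g (x n ω) then x n ω + δ ⟨n, hnT⟩ ω else x n ω :=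
        funext fun ω => by simpa using hxrec ⟨n, hnT⟩ ω
      rw [hx']
      exact Measurable.ite
        (measurableSet_lt (gcont.measurable.comp (ihm.add (hδmeas _)))
          (gcont.measurable.comp ihm))
        (ihm.add (hδmeas _)) ihm
  -- the iterate x t is a measurable function of δ_0, ..., δ_{t-1}
  have hrep : ∀ t : ℕ, t ≤ T + 1 →
      ∃ F : (Fin (T+1) → EuclideanSpace ℝ (Fin d)) → EuclideanSpace ℝ (Fin d),
        Measurable F ∧ (∀ y z, (∀ i : Fin (T+1), (i:ℕ) < t → y i = z i) → F y = F z) ∧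
        ∀ ω, x t ω = F (fun i => δ i ω) := by
    intro t
    induction t with
    | zero =>
      exact fun _ => ⟨fun _ => x0, measurable_const, fun _ _ _ => rfl, fun ω => hx0 ω⟩
    | succ n ih =>
      intro h
      obtain ⟨F, hFm, hFd, hFx⟩ := ih (by omega)
      have hnT : n < T + 1 := by omega
      refine ⟨fun y => if g (F y + y ⟨n, hnT⟩) < g (F y) then F y + y ⟨n, hnT⟩ else F y,
        ?_, ?_, ?_⟩
      · exact Measurable.ite
          (measurableSet_lt (gcont.measurable.comp (hFm.add (measurable_pi_apply _)))
            (gcont.measurable.comp hFm))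
          (hFm.add (measurable_pi_apply _)) hFm
      · intro y z hyz
        have h1 : F y = F z := hFd y z fun i hi => hyz i (by omega)
        have h2 : y ⟨n, hnT⟩ = z ⟨n, hnT⟩ := hyz ⟨n, hnT⟩ (by simp)
        simp only [h1, h2]
      · intro ω
        rw [hxrec ⟨n, hnT⟩ ω]
        simp only [hFx ω]
  -- independence of x t and δ t
  have hindepx : ∀ t : Fin (T+1), IndepFun (x t) (δ t) μ := by
    intro t
    obtain ⟨F, hFm, hFd, hFx⟩ := hrep t (by omega)
    set S : Finset (Fin (T+1)) := Finset.univ.filter (fun i => (i:ℕ) < (t:ℕ)) with hS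
    have hdisj : Disjoint S ({t} : Finset (Fin (T+1))) := by
      simp [Finset.disjoint_singleton_right, hS]
    have h0 := hindep.indepFun_finset S {t} hdisj hδmeas
    set Φ : ((i : S) → EuclideanSpace ℝ (Fin d)) → EuclideanSpace ℝ (Fin d) :=
      fun z => F (fun i => if h : i ∈ S then z ⟨i, h⟩ else 0) with hΦ
    have hΦm : Measurable Φ := by
      apply hFm.comp
      apply measurable_pi_lambda
      intro i
      by_cases h : i ∈ S
      · simpa [h] using measurable_pi_apply (⟨i, h⟩ : S)
      · simpa [h] using (measurable_const :
          Measurable fun _ : (i : S) → EuclideanSpace ℝ (Fin d) => (0 : EuclideanSpace ℝ (Fin d)))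
    have hxeq : x t = Φ ∘ (fun ω (i : S) => δ i ω) := by
      funext ω
      simp only [Function.comp, hΦ]
      rw [hFx ω]
      apply hFd
      intro i hi
      have hiS : i ∈ S := by simp [hS]; exact hi
      simp [hiS]
    have hδeq : δ t = (fun z : (i : ({t} : Finset (Fin (T+1)))) → EuclideanSpace ℝ (Fin d) =>
        z ⟨t, Finset.mem_singleton_self t⟩) ∘ (fun ω (i : ({t} : Finset (Fin (T+1)))) => δ i ω) :=
      rfl
    rw [hxeq, hδeq]
    exact h0.comp hΦm (measurable_pi_apply _)
  -- per-step inequality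
  have key : ∀ t : Fin (T+1),
      Ct * γs * (∫ ω, ‖gradient g (x t ω)‖ ∂μ) ≤
        2 * ((∫ ω, g (x t ω) ∂μ) - (∫ ω, g (x ((t:ℕ)+1) ω) ∂μ)) + L * γs^2 * C := by
    intro t
    have ht : (t:ℕ) ≤ T := by omega
    have hmx : Measurable (x t) := hxmeas t (by omega)
    set ν1 : Measure (EuclideanSpace ℝ (Fin d)) := μ.map (x t) with hν1
    set ν2 : Measure (EuclideanSpace ℝ (Fin d)) := μ.map (δ t) with hν2
    haveI : IsProbabilityMeasure ν1 := Measure.isProbabilityMeasure_map hmx.aemeasurable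
    haveI : IsProbabilityMeasure ν2 := Measure.isProbabilityMeasure_map (hδmeas t).aemeasurable
    have hpair : Measurable fun ω => (x t ω, δ t ω) := hmx.prodMk (hδmeas t)
    have hmap : μ.map (fun ω => (x t ω, δ t ω)) = ν1.prod ν2 :=
      (indepFun_iff_map_prod_eq_prod_map_map hmx.aemeasurable (hδmeas t).aemeasurable).mp
        (hindepx t)
    -- integrability facts
    have hgradν1 : Integrable (fun w => ‖gradient g w‖) ν1 :=
      (integrable_map_measure gradcont.norm.aestronglyMeasurable hmx.aemeasurable).mpr
        (hint_grad t ht)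
    have hδ1 : Integrable (fun ω => ‖δ t ω‖) μ := by
      refine Integrable.mono ((integrable_const (1:ℝ)).add (hint_δ t))
        (hδmeas t).norm.aestronglyMeasurable (Filter.Eventually.of_forall fun ω => ?_)
      have h1 : (0:ℝ) ≤ 1 + ‖δ t ω‖^2 := by positivity
      simp only [Pi.add_apply, Real.norm_eq_abs, abs_of_nonneg (norm_nonneg (δ t ω)),
        abs_of_nonneg h1]
      nlinarith [norm_nonneg (δ t ω)]
    have hnormν2 : Integrable (fun y : EuclideanSpace ℝ (Fin d) => ‖y‖) ν2 :=
      (integrable_map_measure continuous_norm.aestronglyMeasurable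
        (hδmeas t).aemeasurable).mpr hδ1
    have hidν2 : Integrable (fun y : EuclideanSpace ℝ (Fin d) => y) ν2 :=
      (integrable_norm_iff aestronglyMeasurable_id).mp hnormν2
    have hprodint : Integrable (fun p : EuclideanSpace ℝ (Fin d) × EuclideanSpace ℝ (Fin d) =>
        ‖gradient g p.1‖ * ‖p.2‖) (ν1.prod ν2) := hgradν1.mul_prod hnormν2
    have hfcont : Continuous (fun p : EuclideanSpace ℝ (Fin d) × EuclideanSpace ℝ (Fin d) =>
        ⟪gradient g p.1, p.2⟫) := (gradcont.comp continuous_fst).inner continuous_snd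
    have hfint : Integrable (fun p : EuclideanSpace ℝ (Fin d) × EuclideanSpace ℝ (Fin d) =>
        ⟪gradient g p.1, p.2⟫) (ν1.prod ν2) := by
      refine Integrable.mono hprodint hfcont.aestronglyMeasurable
        (Filter.Eventually.of_forall fun p => ?_)
      rw [Real.norm_eq_abs, Real.norm_eq_abs,
        abs_of_nonneg (mul_nonneg (norm_nonneg _) (norm_nonneg _))]
      exact abs_real_inner_le_norm _ _
    -- transfer between μ and the product measure
    have htransfer : ∀ f : EuclideanSpace ℝ (Fin d) × EuclideanSpace ℝ (Fin d) → ℝ,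
        AEStronglyMeasurable f (ν1.prod ν2) →
        ∫ ω, f (x t ω, δ t ω) ∂μ = ∫ p, f p ∂(ν1.prod ν2) := by
      intro f hf
      rw [← hmap, integral_map hpair.aemeasurable (hmap ▸ hf)]
    -- the inner product has zero mean
    have hinner0 : ∫ ω, ⟪gradient g (x t ω), δ t ω⟫ ∂μ = 0 := by
      rw [htransfer _ hfcont.aestronglyMeasurable, integral_prod _ hfint]
      have : ∀ w : EuclideanSpace ℝ (Fin d),
          ∫ y, ⟪gradient g w, y⟫ ∂ν2 = 0 := by
        intro w
        rw [integral_inner hidν2]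
        have h2 : ∫ y, y ∂ν2 = 0 := by
          rw [hν2]
          exact (integral_map (hδmeas t).aemeasurable aestronglyMeasurable_id).trans (hmean t)
        rw [h2, inner_zero_right]
      simp only [this, integral_zero]
    -- μ-integrability of the inner product
    have hinnint : Integrable (fun ω => ⟪gradient g (x t ω), δ t ω⟫) μ := by
      have := hfint
      rw [← hmap] at this
      have h2 := (integrable_map_measure hfcont.aestronglyMeasurable
        hpair.aemeasurable).mp (by rwa [hmap])
      exact h2
    -- lower bound for the expected absolute inner product
    have habs_ge : Ct * γs * (∫ ω, ‖gradient g (x t ω)‖ ∂μ) ≤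
        ∫ ω, |⟪gradient g (x t ω), δ t ω⟫| ∂μ := by
      have habscont : Continuous (fun p : EuclideanSpace ℝ (Fin d) × EuclideanSpace ℝ (Fin d) =>
          |⟪gradient g p.1, p.2⟫|) := hfcont.abs
      have e2 : ∫ ω, |⟪gradient g (x t ω), δ t ω⟫| ∂μ =
          ∫ w, (∫ y, |⟪gradient g w, y⟫| ∂ν2) ∂ν1 := by
        rw [htransfer _ habscont.aestronglyMeasurable, integral_prod _ hfint.abs]
      have e3 : ∀ w : EuclideanSpace ℝ (Fin d),
          Ct * γs * ‖gradient g w‖ ≤ ∫ y, |⟪gradient g w, y⟫| ∂ν2 := by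
        intro w
        have : ∫ y, |⟪gradient g w, y⟫| ∂ν2 = ∫ ω, |⟪δ t ω, gradient g w⟫| ∂μ := by
          rw [hν2, integral_map (hδmeas t).aemeasurable
            ((continuous_const.inner continuous_id).abs).aestronglyMeasurable]
          simp_rw [real_inner_comm]
        rw [this]
        exact hip t (gradient g w)
      have e4 : ∫ w, Ct * γs * ‖gradient g w‖ ∂ν1 ≤
          ∫ w, (∫ y, |⟪gradient g w, y⟫| ∂ν2) ∂ν1 :=
        integral_mono (hgradν1.const_mul _) hfint.abs.integral_prod_left e3
      have e5 : ∫ w, Ct * γs * ‖gradient g w‖ ∂ν1 =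
          Ct * γs * ∫ ω, ‖gradient g (x t ω)‖ ∂μ := by
        rw [integral_const_mul, hν1,
          integral_map hmx.aemeasurable gradcont.norm.aestronglyMeasurable]
      rw [e2, ← e5]
      exact e4
    -- pointwise descent inequality
    have hpt : ∀ ω, g (x ((t:ℕ)+1) ω) ≤ g (x t ω) +
        (⟪gradient g (x t ω), δ t ω⟫ - |⟪gradient g (x t ω), δ t ω⟫|)/2 +
        L/2 * ‖δ t ω‖^2 := by
      intro ω
      have hd := descent_lemma L hL g hg hlip (x t ω) (δ t ω)
      have hnn : (0:ℝ) ≤ L/2 * ‖δ t ω‖^2 := by positivity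
      rw [hxrec t ω]
      rcases le_or_gt 0 ⟪gradient g (x t ω), δ t ω⟫ with hin | hin
      · rw [abs_of_nonneg hin]
        split_ifs with h
        · linarith
        · linarith
      · rw [abs_of_neg hin]
        split_ifs with h
        · linarith
        · push_neg at h
          linarith
    -- integrate the descent inequality
    have habsint : Integrable (fun ω => |⟪gradient g (x t ω), δ t ω⟫|) μ := hinnint.abs
    have hI2 : Integrable (fun ω =>
        (⟪gradient g (x t ω), δ t ω⟫ - |⟪gradient g (x t ω), δ t ω⟫|)/2) μ :=
      (hinnint.sub habsint).div_const 2
    have hI3 : Integrable (fun ω => g (x t ω) +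
        (⟪gradient g (x t ω), δ t ω⟫ - |⟪gradient g (x t ω), δ t ω⟫|)/2) μ :=
      (hint_g t (by omega)).add hI2
    have hI4 : Integrable (fun ω => L/2 * ‖δ t ω‖^2) μ := (hint_δ t).const_mul (L/2)
    have hstep : ∫ ω, g (x ((t:ℕ)+1) ω) ∂μ ≤
        ∫ ω, g (x t ω) ∂μ - (∫ ω, |⟪gradient g (x t ω), δ t ω⟫| ∂μ)/2 +
        L/2 * ∫ ω, ‖δ t ω‖^2 ∂μ := by
      have hI5 : Integrable (fun ω => g (x t ω) +
          (⟪gradient g (x t ω), δ t ω⟫ - |⟪gradient g (x t ω), δ t ω⟫|)/2 +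
          L/2 * ‖δ t ω‖^2) μ := hI3.add hI4
      have := integral_mono (hint_g _ (by omega)) hI5 hpt
      rw [integral_add hI3 hI4, integral_add (hint_g t (by omega)) hI2,
        integral_div, integral_sub hinnint habsint, hinner0, integral_const_mul] at this
      linarith
    have hvv : L/2 * ∫ ω, ‖δ t ω‖^2 ∂μ ≤ L/2 * (γs^2 * C) :=
      mul_le_mul_of_nonneg_left (hvar t) (by positivity)
    linarith [habs_ge, hstep, hvv]
  -- monotonicity of g along the iterates
  have hGmono : (∫ ω, g (x (T+1) ω) ∂μ) ≤ ∫ ω, g (x T ω) ∂μ := by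
    apply integral_mono (hint_g (T+1) le_rfl) (hint_g T (by omega))
    intro ω
    have h := hxrec ⟨T, by omega⟩ ω
    simp only [Fin.val_mk] at h
    show g (x (T+1) ω) ≤ g (x T ω)
    rw [h]
    split_ifs with hcase
    · exact hcase.le
    · exact le_rfl
  have hG0 : ∫ ω, g (x 0 ω) ∂μ = g x0 := by
    have h : (fun ω => g (x 0 ω)) = fun _ => g x0 := funext fun ω => by rw [hx0]
    rw [h, integral_const]; simp
  -- sum the key inequality over t < T
  have key' : ∀ i ∈ Finset.range T, Ct * γs * (∫ ω, ‖gradient g (x i ω)‖ ∂μ) ≤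
      2 * ((∫ ω, g (x i ω) ∂μ) - (∫ ω, g (x (i+1) ω) ∂μ)) + L * γs^2 * C := by
    intro i hi
    have hi' : i < T + 1 := by have := Finset.mem_range.mp hi; omega
    simpa using key ⟨i, hi'⟩
  have hsum := Finset.sum_le_sum key'
  rw [← Finset.mul_sum] at hsum
  have htel : ∑ i ∈ Finset.range T,
      (2 * ((∫ ω, g (x i ω) ∂μ) - (∫ ω, g (x (i+1) ω) ∂μ)) + L * γs^2 * C) =
      2 * ((g x0) - ∫ ω, g (x T ω) ∂μ) + (T:ℝ) * (L * γs^2 * C) := by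
    rw [Finset.sum_add_distrib, ← Finset.mul_sum,
      Finset.sum_range_sub' (fun i => ∫ ω, g (x i ω) ∂μ),
      Finset.sum_const, Finset.card_range, nsmul_eq_mul, hG0]
  rw [htel] at hsum
  -- infimum bound
  set m := (Finset.range (T+1)).inf' (by simp) (fun t => ∫ ω, ‖gradient g (x t ω)‖ ∂μ) with hm
  have hmle : (T:ℝ) * m ≤ ∑ i ∈ Finset.range T, ∫ ω, ‖gradient g (x i ω)‖ ∂μ := by
    calc (T:ℝ) * m = ∑ _i ∈ Finset.range T, m := by
          rw [Finset.sum_const, Finset.card_range, nsmul_eq_mul]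
      _ ≤ _ := Finset.sum_le_sum fun i hi =>
          Finset.inf'_le _ (Finset.mem_range.mpr (by have := Finset.mem_range.mp hi; omega))
  have hchain : Ct * γs * ((T:ℝ) * m) ≤
      2 * (g x0 - ∫ ω, g (x T ω) ∂μ) + (T:ℝ) * (L * γs^2 * C) :=
    le_trans (mul_le_mul_of_nonneg_left hmle (by positivity)) hsum
  -- arithmetic
  have hss : Real.sqrt T ^ 2 = (T:ℝ) := Real.sq_sqrt hTpos.le
  have hγsT : γs * T = γ * Real.sqrt T := by
    rw [hγs_def, div_mul_eq_mul_div, div_eq_iff hsT.ne']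
    linear_combination (-γ) * hss
  have hγs2T : γs^2 * T = γ^2 := by
    rw [hγs_def, div_pow, hss, div_mul_cancel₀ _ hTpos.ne']
  have e1 : Ct * γs * ((T:ℝ) * m) = Ct * (γ * Real.sqrt T) * m := by
    rw [← hγsT]; ring
  have e2 : (T:ℝ) * (L * γs^2 * C) = L * γ^2 * C := by
    rw [← hγs2T]; ring
  rw [e1, e2] at hchain
  have hD : 0 < γ * Ct * Real.sqrt T := by positivity
  rw [div_mul_eq_mul_div, le_div_iff₀ hD]
  linarith [hchain, hGmono]
end

section
/- Let g : ℝ^d → ℝ be differentiable with L-Lipschitz gradient (L-smooth). Then for every x, δ ∈ ℝ^d, min{ g(x), g(x + δ) } ≤ g(x) + (1/2)⟨∇g(x), δ⟩ + (L/2)‖δ‖₂² − (1/2)|⟨∇g(x), δ⟩|. -/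
open scoped RealInnerProductSpace

lemma descent_lemma_s2
    (d : ℕ) (L : ℝ)
    (g : EuclideanSpace ℝ (Fin d) → ℝ)
    (hg : Differentiable ℝ g)
    (hlip : ∀ x y : EuclideanSpace ℝ (Fin d),
      ‖gradient g x - gradient g y‖ ≤ L * ‖x - y‖)
    (x δ : EuclideanSpace ℝ (Fin d)) :
    g (x + δ) ≤ g x + ⟪gradient g x, δ⟫ + (L / 2) * ‖δ‖ ^ 2 := by
  set c : ℝ → EuclideanSpace ℝ (Fin d) := fun t => x + t • δ with hc
  have hderiv : ∀ t : ℝ, HasDerivAt (fun t => g (c t))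
      ⟪gradient g (c t), δ⟫ t := by
    intro t
    have hc' : HasDerivAt c δ t := by
      simpa [hc] using ((hasDerivAt_id t).smul_const δ).const_add x
    have hgF : HasFDerivAt g
        ((InnerProductSpace.toDual ℝ _) (gradient g (c t))) (c t) :=
      (hasGradientAt_iff_hasFDerivAt.mp (hg (c t)).hasGradientAt)
    exact hgF.comp_hasDerivAt t hc'
  set ψ : ℝ → ℝ := fun t => g (c t) - t * ⟪gradient g x, δ⟫ - L * t ^ 2 / 2 * ‖δ‖ ^ 2
    with hψ
  have hψderiv : ∀ t : ℝ, HasDerivAt ψ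
      (⟪gradient g (c t), δ⟫ - ⟪gradient g x, δ⟫ - L * t * ‖δ‖ ^ 2) t := by
    intro t
    have h1 : HasDerivAt (fun t : ℝ => t * ⟪gradient g x, δ⟫)
        ⟪gradient g x, δ⟫ t := by simpa using (hasDerivAt_id t).mul_const _
    have h2 : HasDerivAt (fun t : ℝ => L * t ^ 2 / 2 * ‖δ‖ ^ 2)
        (L * t * ‖δ‖ ^ 2) t := by
      have := ((hasDerivAt_pow 2 t).const_mul L).div_const 2
      have := this.mul_const (‖δ‖ ^ 2)
      exact this.congr_deriv (by rw [show (2:ℕ) - 1 = 1 from rfl]; ring)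
    exact ((hderiv t).sub h1).sub h2
  have hanti : AntitoneOn ψ (Set.Icc (0:ℝ) 1) := by
    apply antitoneOn_of_deriv_nonpos (convex_Icc 0 1)
    · exact (Differentiable.continuous fun t => (hψderiv t).differentiableAt).continuousOn
    · intro t _
      exact (hψderiv t).differentiableAt.differentiableWithinAt
    · intro t ht
      rw [interior_Icc] at ht
      rw [(hψderiv t).deriv]
      have cauchy : ⟪gradient g (c t) - gradient g x, δ⟫ ≤
          ‖gradient g (c t) - gradient g x‖ * ‖δ‖ := real_inner_le_norm _ _
      have hl : ‖gradient g (c t) - gradient g x‖ ≤ L * (t * ‖δ‖) := by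
        have := hlip (c t) x
        simpa [hc, norm_smul, abs_of_pos ht.1, mul_assoc] using this
      have := inner_sub_left (𝕜 := ℝ) (gradient g (c t)) (gradient g x) δ
      nlinarith [norm_nonneg δ, norm_nonneg (gradient g (c t) - gradient g x), ht.1.le]
  have := hanti (Set.left_mem_Icc.mpr zero_le_one) (Set.right_mem_Icc.mpr zero_le_one)
    zero_le_one
  simp only [hψ, hc, zero_smul, add_zero, one_smul] at this
  nlinarith [this]

/-- The key one-step deterministic inequality in the proof of Proposition 2: for an `L`-smooth
function `g`, `min {g(x), g(x+δ)} ≤ g(x) + ½⟨∇g(x), δ⟩ + (L/2)‖δ‖² − ½|⟨∇g(x), δ⟩|`. -/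
theorem smooth_min_step_inequality
    (d : ℕ) (L : ℝ) (hL : 0 ≤ L)
    (g : EuclideanSpace ℝ (Fin d) → ℝ)
    (hg : Differentiable ℝ g)
    (hlip : ∀ x y : EuclideanSpace ℝ (Fin d),
      ‖gradient g x - gradient g y‖ ≤ L * ‖x - y‖)
    (x δ : EuclideanSpace ℝ (Fin d)) :
    min (g x) (g (x + δ)) ≤
      g x + (1 / 2) * ⟪gradient g x, δ⟫ + (L / 2) * ‖δ‖ ^ 2
        - (1 / 2) * |⟪gradient g x, δ⟫| := by
  rcases le_or_gt 0 ⟪gradient g x, δ⟫ with h | h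
  · rw [abs_of_nonneg h]
    have : min (g x) (g (x + δ)) ≤ g x := min_le_left _ _
    nlinarith [sq_nonneg ‖δ‖]
  · rw [abs_of_neg h]
    have h1 := descent_lemma_s2 d L g hg hlip x δ
    have : min (g x) (g (x + δ)) ≤ g (x + δ) := min_le_right _ _
    nlinarith
end

section
/- Let s ≥ 2 and k ≥ s² be integers. For a finite set S ⊆ ℤ × ℤ, let N(S) denote the number of pairs (u, v) ∈ ℤ × ℤ such that the s × s lattice square {u, u+1, …, u+s−1} × {v, v+1, …, v+s−1} is contained in S. Then the maximum of N(S) over all finite sets S ⊆ ℤ × ℤ with |S| = k equals N* = (a − s + 1)(b − s + 1) + max(r − s + 1, 0), where a = ⌊√k⌋, b = ⌊k/a⌋, and r = k − a·b. -/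
lemma shift_card_le (s : ℕ) (hs : 1 ≤ s) (A B : Finset ℤ) (hA : A.Nonempty)
    (h : ∀ a ∈ A, ∀ j : ℕ, j < s → a + (j : ℤ) ∈ B) :
    A.card + (s - 1) ≤ B.card := by
  classical
  set M := A.max' hA with hM
  have hMem : M ∈ A := A.max'_mem hA
  set E : Finset ℤ := (Finset.range (s-1)).image (fun j : ℕ => M + 1 + (j : ℤ)) with hE
  have hsub : A ∪ E ⊆ B := by
    intro x hx
    rcases Finset.mem_union.mp hx with hx | hx
    · have := h x hx 0 (by omega); simpa using this
    · rcases Finset.mem_image.mp hx with ⟨j, hj, rfl⟩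
      have := h M hMem (j+1) (by simp at hj; omega)
      have e : M + ((j:ℕ)+1 : ℕ) = M + 1 + (j:ℤ) := by push_cast; ring
      rwa [e] at this
  have hdisj : Disjoint A E := by
    rw [Finset.disjoint_right]
    intro x hx hxA
    rcases Finset.mem_image.mp hx with ⟨j, hj, rfl⟩
    have := A.le_max' _ hxA
    omega
  have hcard : (A ∪ E).card = A.card + (s-1) := by
    rw [Finset.card_union_of_disjoint hdisj, Finset.card_image_of_injective, Finset.card_range]
    intro x y hxy
    simp only [add_right_inj] at hxy
    exact_mod_cast hxy
  calc A.card + (s-1) = (A ∪ E).card := hcard.symm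
    _ ≤ B.card := Finset.card_le_card hsub


set_option maxHeartbeats 1000000 in
lemma int_core (s k a b r A B M : ℤ) (hs : 2 ≤ s)
    (haa : a*a ≤ k) (hklt : k < (a+1)*(a+1)) (hdm : a*b + r = k)
    (hr0 : 0 ≤ r) (hra : r < a) (hsa : s ≤ a) (hab : a ≤ b)
    (hA : 1 ≤ A) (hB : 1 ≤ B) (h1 : M ≤ A*B)
    (h2 : M + (s-1)*(A+B+(s-1)) ≤ k) :
    M ≤ (a+1-s)*(b+1-s) + max (r+1-s) 0 := by
  have hb2 : b ≤ a + 2 := by nlinarith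
  have hmax0 : (0:ℤ) ≤ max (r+1-s) 0 := le_max_right _ _
  have hu1 : 1 ≤ a+1-s := by omega
  rcases lt_trichotomy (A+B) ((a+1-s)+(b+1-s)) with hc | hc | hc
  · have h4 : 4*M < 4*((a+1-s)*(b+1-s)) := by
      nlinarith [sq_nonneg (A-B),
        mul_nonneg (by linarith : (0:ℤ) ≤ (a+1-s)+(b+1-s)-1-(A+B))
          (by linarith : (0:ℤ) ≤ (a+1-s)+(b+1-s)-1+(A+B)),
        mul_nonneg (by linarith : (0:ℤ) ≤ 2-(b-a)) (by linarith : (0:ℤ) ≤ b-a)]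
    have := (mul_lt_mul_iff_right₀ (show (0:ℤ) < 4 by norm_num)).mp h4
    linarith
  · rcases le_or_gt 1 r with hr1 | hr1
    · have hba1 : b ≤ a+1 := by nlinarith
      have h4 : 4*M < 4*((a+1-s)*(b+1-s)+1) := by
        nlinarith [sq_nonneg (A-B),
          mul_nonneg (by linarith : (0:ℤ) ≤ 1-(b-a)) (by linarith : (0:ℤ) ≤ b-a)]
      have := (mul_lt_mul_iff_right₀ (show (0:ℤ) < 4 by norm_num)).mp h4
      linarith
    · have hr0' : r = 0 := by omega
      have hM : M ≤ (a+1-s)*(b+1-s) := by nlinarith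
      linarith
  · have hmono : (s-1)*((a+1-s)+(b+1-s)+1+(s-1)) ≤ (s-1)*(A+B+(s-1)) := by
      apply mul_le_mul_of_nonneg_left (by linarith) (by linarith)
    have hle : r-(s-1) ≤ max (r+1-s) 0 := by
      have := le_max_left (r+1-s) 0; linarith
    nlinarith

lemma numeric_bound (s k A B M : ℕ) (hs : 2 ≤ s) (hk : s^2 ≤ k)
    (hA : 1 ≤ A) (hB : 1 ≤ B) (h1 : M ≤ A*B)
    (h2 : M + (s-1)*(A+B+(s-1)) ≤ k) :
    M ≤ (Nat.sqrt k - s + 1) * (k / Nat.sqrt k - s + 1) +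
        (k - Nat.sqrt k * (k / Nat.sqrt k) + 1 - s) := by
  set a := Nat.sqrt k with ha
  set b := k / a with hb
  set r := k % a with hrdef
  have hsa : s ≤ a := by
    have h := Nat.sqrt_le_sqrt hk
    rwa [Nat.sqrt_eq' s] at h
  have ha0 : 0 < a := by omega
  have haak : a*a ≤ k := Nat.sqrt_le k
  have hklt : k < (a+1)*(a+1) := Nat.lt_succ_sqrt k
  have hdm : a * b + r = k := Nat.div_add_mod k a
  have hra : r < a := Nat.mod_lt _ ha0
  have hab : a ≤ b := (Nat.le_div_iff_mul_le ha0).mpr haak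
  have key := int_core (s:ℤ) (k:ℤ) (a:ℤ) (b:ℤ) (r:ℤ) (A:ℤ) (B:ℤ) (M:ℤ)
    (by exact_mod_cast hs) (by exact_mod_cast haak) (by exact_mod_cast hklt)
    (by exact_mod_cast hdm) (by positivity) (by exact_mod_cast hra)
    (by exact_mod_cast hsa) (by exact_mod_cast hab)
    (by exact_mod_cast hA) (by exact_mod_cast hB) (by exact_mod_cast h1)
    (by zify [show 1 ≤ s by omega] at h2; linarith)
  have hrw : k - a*b = r := by omega
  rw [hrw]
  have hXZ : (((a - s + 1) * (b - s + 1) : ℕ) : ℤ) = ((a:ℤ)+1-s)*((b:ℤ)+1-s) := by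
    push_cast [Nat.cast_sub hsa, Nat.cast_sub (le_trans hsa hab)]
    ring
  rcases le_or_gt s (r+1) with hc | hc
  · rw [max_eq_left (by
      have : (s:ℤ) ≤ (r:ℤ)+1 := by exact_mod_cast hc
      linarith)] at key
    omega
  · rw [max_eq_right (by
      have : (r:ℤ)+1 < (s:ℤ) := by exact_mod_cast hc
      linarith)] at key
    omega

lemma young_bound (s k : ℕ) (hs : 2 ≤ s) (hk : s^2 ≤ k) (l : ℕ → ℕ)
    (hmono : ∀ ⦃t t'⦄, t ≤ t' → l t' ≤ l t)
    (hsum : ∑ t ∈ Finset.Icc 1 (k+s), l t = k) :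
    ∑ t ∈ Finset.Icc s (k+s), (l t - (s-1)) ≤
      (Nat.sqrt k - s + 1) * (k / Nat.sqrt k - s + 1) +
        (k - Nat.sqrt k * (k / Nat.sqrt k) + 1 - s) := by
  classical
  by_cases hne : ∃ t ∈ Finset.Icc s (k+s), s ≤ l t
  · set F := (Finset.Icc s (k+s)).filter (fun t => s ≤ l t) with hF
    have hFne : F.Nonempty := by
      obtain ⟨t, ht, hlt⟩ := hne
      exact ⟨t, Finset.mem_filter.mpr ⟨ht, hlt⟩⟩
    set b' := F.max' hFne with hb'
    have hb'mem : b' ∈ F := F.max'_mem hFne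
    have hb'I : b' ∈ Finset.Icc s (k+s) := (Finset.mem_filter.mp hb'mem).1
    have hsb' : s ≤ b' := (Finset.mem_Icc.mp hb'I).1
    have hb'k : b' ≤ k+s := (Finset.mem_Icc.mp hb'I).2
    have hlb' : s ≤ l b' := (Finset.mem_filter.mp hb'mem).2
    have hq : s ≤ l s := le_trans hlb' (hmono hsb')
    set q := l s with hqdef
    set p := b' - s + 1 with hp
    -- step A
    have hA : ∑ t ∈ Finset.Icc s (k+s), (l t - (s-1)) = ∑ t ∈ Finset.Icc s b', (l t - (s-1)) := by
      symm
      apply Finset.sum_subset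
      · intro t ht
        rw [Finset.mem_Icc] at ht ⊢
        omega
      · intro t ht hnt
        rw [Finset.mem_Icc] at ht hnt
        have htb' : b' < t := by omega
        have : ¬ s ≤ l t := by
          intro hst
          have : t ∈ F := Finset.mem_filter.mpr ⟨Finset.mem_Icc.mpr ⟨by omega, by omega⟩, hst⟩
          have := F.le_max' t this
          omega
        omega
    set M := ∑ t ∈ Finset.Icc s b', (l t - (s-1)) with hM
    -- step B
    have hcard : (Finset.Icc s b').card = p := by rw [Nat.card_Icc]; omega
    have hB : M ≤ p * (q - (s-1)) := by
      rw [hM]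
      calc ∑ t ∈ Finset.Icc s b', (l t - (s-1))
          ≤ ∑ _t ∈ Finset.Icc s b', (q - (s-1)) := by
            apply Finset.sum_le_sum
            intro t ht
            have := hmono (Finset.mem_Icc.mp ht).1
            omega
        _ = p * (q - (s-1)) := by rw [Finset.sum_const, hcard, smul_eq_mul]
    -- step C
    have hsplit : ∑ t ∈ Finset.Icc 1 (k+s), l t
        = ∑ t ∈ Finset.Icc 1 (s-1), l t + ∑ t ∈ Finset.Icc s (k+s), l t := by
      rw [← Finset.sum_union]
      · congr 1
        ext t
        simp only [Finset.mem_union, Finset.mem_Icc]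
        omega
      · rw [Finset.disjoint_left]
        intro t ht ht'
        rw [Finset.mem_Icc] at ht ht'
        omega
    have hlow : (s-1) * q ≤ ∑ t ∈ Finset.Icc 1 (s-1), l t := by
      calc (s-1) * q = ∑ _t ∈ Finset.Icc 1 (s-1), q := by
            have e : s-1+1-1 = s-1 := by omega
            rw [Finset.sum_const, Nat.card_Icc, e, smul_eq_mul]
        _ ≤ ∑ t ∈ Finset.Icc 1 (s-1), l t := by
            apply Finset.sum_le_sum
            intro t ht
            exact hmono (by rw [Finset.mem_Icc] at ht; omega : t ≤ s)
    have hmid : M + p * (s-1) ≤ ∑ t ∈ Finset.Icc s (k+s), l t := by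
      have h1 : ∑ t ∈ Finset.Icc s b', l t = M + p * (s-1) := by
        have e : ∀ t ∈ Finset.Icc s b', l t = (l t - (s-1)) + (s-1) := by
          intro t ht
          have htb : t ≤ b' := (Finset.mem_Icc.mp ht).2
          have : s ≤ l t := le_trans hlb' (hmono htb)
          omega
        rw [hM, Finset.sum_congr rfl e, Finset.sum_add_distrib, Finset.sum_const, hcard,
          smul_eq_mul]
      rw [← h1]
      apply Finset.sum_le_sum_of_subset
      intro t ht
      rw [Finset.mem_Icc] at ht ⊢
      omega
    have hC : M + (s-1)*(p + (q - (s-1)) + (s-1)) ≤ k := by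
      have e : p + (q - (s-1)) + (s-1) = p + q := by omega
      rw [e, Nat.mul_add]
      have h2 : (s-1)*q + (M + p*(s-1)) ≤ k := by
        rw [← hsum, hsplit]
        exact Nat.add_le_add hlow hmid
      have e2 : p*(s-1) = (s-1)*p := Nat.mul_comm _ _
      linarith
    rw [hA]
    exact numeric_bound s k p (q - (s-1)) M hs hk (by omega) (by omega) hB hC
  · push_neg at hne
    have : ∑ t ∈ Finset.Icc s (k+s), (l t - (s-1)) = 0 := by
      apply Finset.sum_eq_zero
      intro t ht
      have := hne t ht
      omega
    rw [this]
    exact Nat.zero_le _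

lemma upper_bound (s k : ℕ) (hs : 2 ≤ s) (hk : s^2 ≤ k) (S : Finset (ℤ×ℤ)) (hS : S.card = k) :
    Set.ncard {p : ℤ × ℤ | ∀ i j : ℕ, i < s → j < s → (p.1+(i:ℤ), p.2+(j:ℤ)) ∈ S} ≤
      (Nat.sqrt k - s + 1) * (k / Nat.sqrt k - s + 1) +
        (k - Nat.sqrt k * (k / Nat.sqrt k) + 1 - s) := by
  classical
  set Pf := S.filter (fun p => ∀ i : ℕ, i < s → ∀ j : ℕ, j < s → (p.1+(i:ℤ), p.2+(j:ℤ)) ∈ S)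
    with hPf
  have hset : {p : ℤ × ℤ | ∀ i j : ℕ, i < s → j < s → (p.1+(i:ℤ), p.2+(j:ℤ)) ∈ S} = ↑Pf := by
    ext p
    simp only [Set.mem_setOf_eq, Finset.coe_filter, Finset.mem_coe, hPf, Finset.mem_filter]
    constructor
    · intro h
      refine ⟨?_, fun i hi j hj => h i j hi hj⟩
      have := h 0 0 (by omega) (by omega)
      simpa using this
    · intro h i j hi hj
      exact h.2 i hi j hj
  rw [hset, Set.ncard_coe_finset]
  -- columns of S
  set X := S.image Prod.fst with hX
  set c : ℤ → ℕ := fun x => (S.filter (fun p => p.1 = x)).card with hc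
  have hck : ∑ x ∈ X, c x = k := by
    rw [← hS]
    exact (Finset.card_eq_sum_card_fiberwise (fun p hp => Finset.mem_image_of_mem _ hp)).symm
  have hcle : ∀ x, c x ≤ k := by
    intro x
    rw [← hS]
    exact Finset.card_le_card (Finset.filter_subset _ _)
  have hcX : ∀ x : ℤ, 1 ≤ c x → x ∈ X := by
    intro x hx
    obtain ⟨p, hp⟩ := Finset.card_pos.mp hx
    rw [Finset.mem_filter] at hp
    rw [hX, ← hp.2]
    exact Finset.mem_image_of_mem _ hp.1
  -- level sets
  set l : ℕ → ℕ := fun t => ((X.filter (fun x => t ≤ c x)).card) with hl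
  have hmono : ∀ ⦃t t'⦄, t ≤ t' → l t' ≤ l t := by
    intro t t' htt
    apply Finset.card_le_card
    intro x hx
    rw [Finset.mem_filter] at hx ⊢
    exact ⟨hx.1, le_trans htt hx.2⟩
  have hsum : ∑ t ∈ Finset.Icc 1 (k+s), l t = k := by
    calc ∑ t ∈ Finset.Icc 1 (k+s), l t
        = ∑ t ∈ Finset.Icc 1 (k+s), ∑ x ∈ X, (if t ≤ c x then 1 else 0) := by
          exact Finset.sum_congr rfl (fun t _ => Finset.card_filter _ _)
      _ = ∑ x ∈ X, ∑ t ∈ Finset.Icc 1 (k+s), (if t ≤ c x then 1 else 0) := Finset.sum_comm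
      _ = ∑ x ∈ X, ((Finset.Icc 1 (k+s)).filter (fun t => t ≤ c x)).card := by
          exact Finset.sum_congr rfl (fun x _ => (Finset.card_filter _ _).symm)
      _ = ∑ x ∈ X, c x := by
          apply Finset.sum_congr rfl
          intro x hx
          have h1 : (Finset.Icc 1 (k+s)).filter (fun t => t ≤ c x) = Finset.Icc 1 (c x) := by
            ext t
            simp only [Finset.mem_filter, Finset.mem_Icc]
            have := hcle x
            omega
          rw [h1, Nat.card_Icc]
          omega
      _ = k := hck
  -- fibers of Pf
  set U := Pf.image Prod.fst with hU
  set V : ℤ → Finset ℤ := fun u => (Pf.filter (fun p => p.1 = u)).image Prod.snd with hV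
  have hVcard : ∀ u : ℤ, (V u).card = (Pf.filter (fun p => p.1 = u)).card := by
    intro u
    apply Finset.card_image_of_injOn
    intro p hp q hq hpq
    rw [Finset.mem_coe, Finset.mem_filter] at hp hq
    exact Prod.ext (hp.2.trans hq.2.symm) hpq
  have hN : Pf.card = ∑ u ∈ U, (V u).card := by
    rw [Finset.card_eq_sum_card_fiberwise (fun p hp => Finset.mem_image_of_mem Prod.fst hp)]
    exact Finset.sum_congr rfl (fun u _ => (hVcard u).symm)
  have hVne : ∀ u ∈ U, 1 ≤ (V u).card := by
    intro u hu
    rw [hU] at hu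
    obtain ⟨p, hp, rfl⟩ := Finset.mem_image.mp hu
    apply Finset.card_pos.mpr
    exact ⟨p.2, Finset.mem_image_of_mem _ (Finset.mem_filter.mpr ⟨hp, rfl⟩)⟩
  have hVk : ∀ u : ℤ, (V u).card ≤ k := by
    intro u
    calc (V u).card ≤ (Pf.filter (fun p => p.1 = u)).card := le_of_eq (hVcard u)
      _ ≤ Pf.card := Finset.card_le_card (Finset.filter_subset _ _)
      _ ≤ S.card := Finset.card_le_card (Finset.filter_subset _ _)
      _ = k := hS
  -- the column inequality
  have hVc : ∀ u ∈ U, ∀ i : ℕ, i < s → (V u).card + (s-1) ≤ c (u+(i:ℤ)) := by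
    intro u hu i hi
    have hstep : (V u).card + (s-1) ≤ ((S.filter (fun p => p.1 = u+(i:ℤ))).image Prod.snd).card := by
      apply shift_card_le s (by omega) _ _ (Finset.card_pos.mp (hVne u hu))
      intro v hv j hj
      rw [hV] at hv
      obtain ⟨p, hp, rfl⟩ := Finset.mem_image.mp hv
      rw [Finset.mem_filter] at hp
      obtain ⟨hpPf, hpu⟩ := hp
      rw [hPf, Finset.mem_filter] at hpPf
      have := hpPf.2 i hi j hj
      rw [hpu] at this
      exact Finset.mem_image.mpr ⟨(u+(i:ℤ), p.2+(j:ℤ)), Finset.mem_filter.mpr ⟨this, rfl⟩, rfl⟩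
    calc (V u).card + (s-1) ≤ _ := hstep
      _ ≤ c (u+(i:ℤ)) := Finset.card_image_le
  -- double counting
  have hswap : Pf.card ≤ ∑ t ∈ Finset.Icc s (k+s), (l t - (s-1)) := by
    have step1 : Pf.card = ∑ u ∈ U,
        ((Finset.Icc s (k+s)).filter (fun t => t ≤ (V u).card + (s-1))).card := by
      rw [hN]
      apply Finset.sum_congr rfl
      intro u hu
      have h1 : (Finset.Icc s (k+s)).filter (fun t => t ≤ (V u).card + (s-1))
          = Finset.Icc s ((V u).card + (s-1)) := by
        ext t
        simp only [Finset.mem_filter, Finset.mem_Icc]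
        have := hVk u
        omega
      rw [h1, Nat.card_Icc]
      have := hVne u hu
      omega
    have step2 : ∑ u ∈ U, ((Finset.Icc s (k+s)).filter (fun t => t ≤ (V u).card + (s-1))).card
        = ∑ t ∈ Finset.Icc s (k+s), (U.filter (fun u => t ≤ (V u).card + (s-1))).card := by
      calc ∑ u ∈ U, ((Finset.Icc s (k+s)).filter (fun t => t ≤ (V u).card + (s-1))).card
          = ∑ u ∈ U, ∑ t ∈ Finset.Icc s (k+s), (if t ≤ (V u).card + (s-1) then 1 else 0) := by
            exact Finset.sum_congr rfl (fun u _ => Finset.card_filter _ _)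
        _ = ∑ t ∈ Finset.Icc s (k+s), ∑ u ∈ U, (if t ≤ (V u).card + (s-1) then 1 else 0) :=
            Finset.sum_comm
        _ = _ := Finset.sum_congr rfl (fun t _ => (Finset.card_filter _ _).symm)
    have step3 : ∀ t ∈ Finset.Icc s (k+s),
        (U.filter (fun u => t ≤ (V u).card + (s-1))).card ≤ l t - (s-1) := by
      intro t ht
      rw [Finset.mem_Icc] at ht
      set W := U.filter (fun u => t ≤ (V u).card + (s-1)) with hW
      rcases Finset.eq_empty_or_nonempty W with he | hne
      · rw [he]; simp
      · have hshift : W.card + (s-1) ≤ l t := by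
          apply shift_card_le s (by omega) _ _ hne
          intro u hu i hi
          rw [hW, Finset.mem_filter] at hu
          obtain ⟨huU, hut⟩ := hu
          have hci := hVc u huU i hi
          have hc1 : t ≤ c (u+(i:ℤ)) := le_trans hut hci
          apply Finset.mem_filter.mpr
          refine ⟨hcX _ ?_, hc1⟩
          omega
        omega
    calc Pf.card = _ := step1
      _ = _ := step2
      _ ≤ ∑ t ∈ Finset.Icc s (k+s), (l t - (s-1)) := Finset.sum_le_sum step3
  exact le_trans hswap (young_bound s k hs hk l hmono hsum)

lemma lower_bound (s k : ℕ) (hs : 2 ≤ s) (hk : s^2 ≤ k) :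
    ∃ S : Finset (ℤ×ℤ), S.card = k ∧
      (Nat.sqrt k - s + 1) * (k / Nat.sqrt k - s + 1) +
        (k - Nat.sqrt k * (k / Nat.sqrt k) + 1 - s)
      = Set.ncard {p : ℤ × ℤ | ∀ i j : ℕ, i < s → j < s → (p.1+(i:ℤ), p.2+(j:ℤ)) ∈ S} := by
  classical
  set a := Nat.sqrt k with ha
  set b := k / a with hb
  set r := k % a with hrdef
  have hsa : s ≤ a := by
    have h := Nat.sqrt_le_sqrt hk
    rwa [Nat.sqrt_eq' s] at h
  have ha0 : 0 < a := by omega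
  have haak : a*a ≤ k := Nat.sqrt_le k
  have hdm : a * b + r = k := Nat.div_add_mod k a
  have hra : r < a := Nat.mod_lt _ ha0
  have hab : a ≤ b := (Nat.le_div_iff_mul_le ha0).mpr haak
  set S : Finset (ℤ×ℤ) :=
    ((Finset.range a ×ˢ Finset.range b).image (fun q : ℕ×ℕ => ((q.1:ℤ), (q.2:ℤ)))) ∪
    ((Finset.range r).image (fun i : ℕ => ((i:ℤ), (b:ℤ)))) with hSdef
  have hmemS : ∀ x y : ℤ, ((x,y) ∈ S) ↔
      ((0 ≤ x ∧ x < a ∧ 0 ≤ y ∧ y < b) ∨ (0 ≤ x ∧ x < r ∧ y = b)) := by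
    intro x y
    rw [hSdef]
    simp only [Finset.mem_union, Finset.mem_image, Finset.mem_product, Finset.mem_range,
      Prod.mk.injEq, Prod.exists]
    constructor
    · rintro (⟨i, j, ⟨hi, hj⟩, hx, hy⟩ | ⟨i, hi, hx, hy⟩)
      · left; omega
      · right; omega
    · rintro (⟨hx0, hxa, hy0, hyb⟩ | ⟨hx0, hxr, hyb⟩)
      · exact Or.inl ⟨x.toNat, y.toNat, ⟨by omega, by omega⟩, by omega, by omega⟩
      · exact Or.inr ⟨x.toNat, by omega, by omega, by omega⟩
  have hcard : S.card = k := by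
    rw [hSdef, Finset.card_union_of_disjoint, Finset.card_image_of_injective,
      Finset.card_image_of_injective, Finset.card_product, Finset.card_range,
      Finset.card_range, Finset.card_range]
    · exact hdm
    · intro i j hij
      simpa using hij
    · intro p q hpq
      simp only [Prod.mk.injEq] at hpq
      exact Prod.ext (by exact_mod_cast hpq.1) (by exact_mod_cast hpq.2)
    · rw [Finset.disjoint_right]
      rintro ⟨x, y⟩ h1 h2
      rw [Finset.mem_image] at h1
      rw [Finset.mem_image] at h2
      obtain ⟨i, hi, heq1⟩ := h1
      obtain ⟨⟨i', j'⟩, hij, heq2⟩ := h2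
      simp only [Prod.mk.injEq] at heq1 heq2
      rw [Finset.mem_product, Finset.mem_range, Finset.mem_range] at hij
      have : ((j':ℕ) : ℤ) = (b:ℤ) := by rw [heq2.2, ← heq1.2]
      have : j' = b := by exact_mod_cast this
      omega
  set T : Finset (ℤ×ℤ) :=
    (Finset.Icc (0:ℤ) ((a:ℤ)-s) ×ˢ Finset.Icc (0:ℤ) ((b:ℤ)-s)) ∪
    (Finset.Icc (0:ℤ) ((r:ℤ)-s) ×ˢ ({((b:ℤ)-s+1)} : Finset ℤ)) with hTdef
  have hposset : {p : ℤ × ℤ | ∀ i j : ℕ, i < s → j < s → (p.1+(i:ℤ), p.2+(j:ℤ)) ∈ S} = ↑T := by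
    ext ⟨x, y⟩
    simp only [Set.mem_setOf_eq, Finset.coe_union, Set.mem_union, Finset.coe_product,
      Set.mem_prod, Finset.mem_coe, Finset.mem_Icc, Finset.mem_singleton, hTdef]
    constructor
    · intro h
      have h00 := (hmemS x y).mp (by simpa using h 0 0 (by omega) (by omega))
      have htop := (hmemS x (y+((s-1:ℕ):ℤ))).mp (by simpa using h 0 (s-1) (by omega) (by omega))
      rcases lt_or_ge (y + (s:ℤ) - 1) (b:ℤ) with hcase | hcase
      · left
        have hrow := fun (i : ℕ) (hi : i < s) => (hmemS (x+(i:ℤ)) y).mp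
          (by simpa using h i 0 hi (by omega))
        have hlast := hrow (s-1) (by omega)
        push_cast [Nat.cast_sub (show 1 ≤ s by omega)] at hlast htop
        constructor
        · omega
        · omega
      · right
        have hrow := fun (i : ℕ) (hi : i < s) => (hmemS (x+(i:ℤ)) (y+((s-1:ℕ):ℤ))).mp
          (h i (s-1) hi (by omega))
        have h0' := hrow 0 (by omega)
        have hlast := hrow (s-1) (by omega)
        push_cast [Nat.cast_sub (show 1 ≤ s by omega)] at h0' hlast htop
        constructor
        · omega
        · omega
    · rintro (⟨⟨hx0, hxa⟩, hy0, hyb⟩ | ⟨⟨hx0, hxr⟩, hyb⟩) <;>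
      · intro i j hi hj
        rw [hmemS]
        omega
  have hTcard : T.card = (a - s + 1) * (b - s + 1) + (r + 1 - s) := by
    rw [hTdef, Finset.card_union_of_disjoint, Finset.card_product, Finset.card_product,
      Int.card_Icc, Int.card_Icc, Int.card_Icc, Finset.card_singleton]
    · have e1 : ((a:ℤ) - s + 1 - 0).toNat = a - s + 1 := by omega
      have e2 : ((b:ℤ) - s + 1 - 0).toNat = b - s + 1 := by omega
      have e3 : ((r:ℤ) - s + 1 - 0).toNat = r + 1 - s := by omega
      rw [e1, e2, e3, mul_one]
    · rw [Finset.disjoint_right]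
      rintro ⟨x, y⟩ h1 h2
      simp only [Finset.mem_product, Finset.mem_Icc, Finset.mem_singleton] at h1 h2
      omega
  have hrw : k - a*b = r := by omega
  refine ⟨S, hcard, ?_⟩
  rw [hposset, Set.ncard_coe_finset, hTcard, hrw]


/-- Proposition 3: among all finite subsets `S ⊆ ℤ × ℤ` of cardinality `k ≥ s²`, the maximal
number of axis-aligned `s × s` lattice squares contained in `S` is
`N* = (a − s + 1)(b − s + 1) + (r − s + 1)⁺` with `a = ⌊√k⌋`, `b = ⌊k/a⌋`, `r = k − a·b`. -/
theorem square_shape_maximizes_filter_count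
    (s k : ℕ) (hs : 2 ≤ s) (hk : s ^ 2 ≤ k) :
    IsGreatest
      {n : ℕ | ∃ S : Finset (ℤ × ℤ), S.card = k ∧
        n = Set.ncard {p : ℤ × ℤ |
          ∀ i j : ℕ, i < s → j < s → (p.1 + (i : ℤ), p.2 + (j : ℤ)) ∈ S}}
      ((Nat.sqrt k - s + 1) * (k / Nat.sqrt k - s + 1) +
        (k - Nat.sqrt k * (k / Nat.sqrt k) + 1 - s)) := by
  constructor
  · obtain ⟨S, h1, h2⟩ := lower_bound s k hs hk
    exact ⟨S, h1, h2⟩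
  · rintro n ⟨S, hcard, rfl⟩
    exact upper_bound s k hs hk S hcard
end

section
/- Let w, h, c be positive integers with h ≤ w and ε > 0. Index pixels by ZMod w × ZMod w (wraparound indexing). For a window position (r, s) ∈ ZMod w × ZMod w and signs σ ∈ {−1, 1}^{Fin h × Fin h × Fin c}, define δ^{(r,s,σ)} ∈ ℝ^{ZMod w × ZMod w × Fin c} by δ^{(r,s,σ)}_{r+k, s+l, i} = 2ε·σ_{k,l,i} for k, l ∈ Fin h and i ∈ Fin c, and δ^{(r,s,σ)} = 0 at all other coordinates. Then for every v ∈ ℝ^{ZMod w × ZMod w × Fin c}: (1 / (w² · 2^{c h²})) · Σ_{(r,s)} Σ_{σ} |⟨δ^{(r,s,σ)}, v⟩| ≥ (√2 · ε · h² / w²) · ‖v‖₂. -/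
set_option linter.unusedSectionVars false
open Finset

namespace PMult
variable {ι : Type*} [Fintype ι] [DecidableEq ι]

noncomputable def chi (b : Bool) : ℝ := if b then 1 else -1

lemma chi_mul_self (b : Bool) : chi b * chi b = 1 := by cases b <;> simp [chi]

lemma chi_not (b : Bool) : chi (!b) = - chi b := by cases b <;> simp [chi]

noncomputable def WAL (A : Finset ι) (σ : ι → Bool) : ℝ := ∏ i ∈ A, chi (σ i)

noncomputable def flip (j : ι) (σ : ι → Bool) : ι → Bool := Function.update σ j (!σ j)

lemma flip_invol (j : ι) : Function.Involutive (flip (ι := ι) j) := by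
  intro σ
  funext i
  by_cases h : i = j
  · subst h; simp [flip]
  · simp [flip, Function.update_of_ne h]

lemma WAL_flip (A : Finset ι) (j : ι) (σ : ι → Bool) :
    WAL A (flip j σ) = (if j ∈ A then -1 else 1) * WAL A σ := by
  by_cases hj : j ∈ A
  · rw [if_pos hj, WAL, WAL, ← Finset.prod_erase_mul A _ hj, ← Finset.prod_erase_mul A _ hj]
    have h1 : ∀ i ∈ A.erase j, chi (flip j σ i) = chi (σ i) := by
      intro i hi
      rw [flip, Function.update_of_ne (Finset.ne_of_mem_erase hi)]
    rw [Finset.prod_congr rfl h1]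
    have : chi (flip j σ j) = - chi (σ j) := by rw [flip, Function.update_self, chi_not]
    rw [this]; ring
  · rw [if_neg hj, one_mul, WAL, WAL]
    refine Finset.prod_congr rfl fun i hi => ?_
    have : i ≠ j := fun h => hj (h ▸ hi)
    rw [flip, Function.update_of_ne this]

lemma sum_WAL_eq_zero (A : Finset ι) (hA : A.Nonempty) :
    ∑ σ : ι → Bool, WAL A σ = 0 := by
  obtain ⟨j, hj⟩ := hA
  have e : (ι → Bool) ≃ (ι → Bool) := (flip_invol j).toPerm
  have h1 : ∑ σ : ι → Bool, WAL A σ = ∑ σ : ι → Bool, WAL A (flip j σ) :=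
    (Fintype.sum_equiv ((flip_invol j).toPerm) _ _ (fun σ => rfl)).symm
  have h2 : ∀ σ, WAL A (flip j σ) = - WAL A σ := by
    intro σ; rw [WAL_flip, if_pos hj]; ring
  simp only [h2, Finset.sum_neg_distrib] at h1
  linarith

lemma sum_finset_prod (g : ι → ℝ) :
    ∑ A : Finset ι, ∏ i ∈ A, g i = ∏ i : ι, (g i + 1) := by
  rw [Finset.prod_add]
  simp [Finset.powerset_univ]

lemma sum_WAL_mul (σ τ : ι → Bool) :
    ∑ A : Finset ι, WAL A σ * WAL A τ = if σ = τ then (2:ℝ) ^ (Fintype.card ι) else 0 := by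
  have h1 : ∀ A : Finset ι, WAL A σ * WAL A τ = ∏ i ∈ A, (chi (σ i) * chi (τ i)) := by
    intro A; rw [WAL, WAL, ← Finset.prod_mul_distrib]
  simp only [h1]
  rw [sum_finset_prod]
  by_cases h : σ = τ
  · subst h
    rw [if_pos rfl]
    have : ∀ i : ι, chi (σ i) * chi (σ i) + 1 = 2 := by
      intro i; cases (σ i) <;> norm_num [chi]
    rw [Finset.prod_congr rfl (fun i _ => this i), Finset.prod_const, Finset.card_univ]
  · rw [if_neg h]
    obtain ⟨j, hj⟩ : ∃ j, σ j ≠ τ j := Function.ne_iff.mp h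
    refine Finset.prod_eq_zero (Finset.mem_univ j) ?_
    cases hσ : σ j <;> cases hτ : τ j <;> simp_all [chi]

noncomputable def fc (f : (ι → Bool) → ℝ) (A : Finset ι) : ℝ := ∑ σ : ι → Bool, f σ * WAL A σ

lemma parseval (f : (ι → Bool) → ℝ) :
    ∑ A : Finset ι, fc f A ^ 2 = 2 ^ (Fintype.card ι) * ∑ σ : ι → Bool, f σ ^ 2 := by
  have h1 : ∀ A : Finset ι, fc f A ^ 2 =
      ∑ σ : ι → Bool, ∑ τ : ι → Bool, f σ * f τ * (WAL A σ * WAL A τ) := by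
    intro A
    rw [fc, sq, Finset.sum_mul_sum]
    exact Finset.sum_congr rfl fun σ _ => Finset.sum_congr rfl fun τ _ => by ring
  simp only [h1]
  rw [Finset.sum_comm]
  have h2 : ∀ σ : ι → Bool,
      ∑ A : Finset ι, ∑ τ : ι → Bool, f σ * f τ * (WAL A σ * WAL A τ)
        = 2 ^ (Fintype.card ι) * f σ ^ 2 := by
    intro σ
    rw [Finset.sum_comm]
    have h3 : ∀ τ : ι → Bool, ∑ A : Finset ι, f σ * f τ * (WAL A σ * WAL A τ)
        = f σ * f τ * (if σ = τ then (2:ℝ) ^ (Fintype.card ι) else 0) := by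
      intro τ; rw [← Finset.mul_sum, sum_WAL_mul]
    simp only [h3, mul_ite, mul_zero]
    rw [Finset.sum_ite_eq Finset.univ σ (fun τ => f σ * f τ * 2 ^ (Fintype.card ι))]
    simp [sq]; ring
  simp only [h2]
  rw [← Finset.mul_sum]

lemma fc_flip (f : (ι → Bool) → ℝ) (j : ι) (A : Finset ι) :
    (∑ σ : ι → Bool, f (flip j σ) * WAL A σ) = (if j ∈ A then -1 else 1) * fc f A := by
  have h1 : ∑ σ : ι → Bool, f (flip j σ) * WAL A σ
      = ∑ σ : ι → Bool, f σ * WAL A (flip j σ) := by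
    refine Fintype.sum_equiv ((flip_invol j).toPerm) _ _ (fun σ => ?_)
    simp only [Function.Involutive.coe_toPerm]
    rw [flip_invol j σ]
  rw [h1, fc, Finset.mul_sum]
  exact Finset.sum_congr rfl fun σ _ => by rw [WAL_flip]; ring

lemma parseval_d (f : (ι → Bool) → ℝ) (j : ι) :
    ∑ A ∈ Finset.univ.filter (fun A : Finset ι => j ∈ A), fc f A ^ 2 =
      2 ^ (Fintype.card ι) * ∑ σ : ι → Bool, ((f σ - f (flip j σ)) / 2) ^ 2 := by
  set g : (ι → Bool) → ℝ := fun σ => (f σ - f (flip j σ)) / 2 with hg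
  have h1 : ∀ A : Finset ι, fc g A = if j ∈ A then fc f A else 0 := by
    intro A
    have : fc g A = ((∑ σ : ι → Bool, f σ * WAL A σ)
        - ∑ σ : ι → Bool, f (flip j σ) * WAL A σ) / 2 := by
      rw [fc, eq_div_iff (two_ne_zero (α := ℝ)), Finset.sum_mul, ← Finset.sum_sub_distrib]
      refine Finset.sum_congr rfl fun σ _ => ?_
      show (f σ - f (flip j σ)) / 2 * WAL A σ * 2 = _
      ring
    rw [this, fc_flip]
    by_cases hj : j ∈ A
    · rw [if_pos hj, if_pos hj, fc]; ring
    · rw [if_neg hj, if_neg hj, fc]; ring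
  have h2 := parseval g
  rw [← h2]
  rw [Finset.sum_filter]
  refine Finset.sum_congr rfl fun A _ => ?_
  rw [h1]
  by_cases hj : j ∈ A <;> simp [hj]

lemma fc_even (f : (ι → Bool) → ℝ) (hf : ∀ σ, f (fun i => !σ i) = f σ)
    (A : Finset ι) (hA : Odd A.card) : fc f A = 0 := by
  have h1 : fc f A = ∑ σ : ι → Bool, f σ * WAL A (fun i => !σ i) := by
    rw [fc]
    refine Fintype.sum_equiv ((Function.Involutive.toPerm (fun σ i => !σ i)
      (by intro σ; funext i; simp))) _ _ (fun σ => ?_)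
    show f σ * WAL A σ = f (fun i => !σ i) * WAL A (fun i => !!σ i)
    rw [hf]
    have : (fun i => !!σ i) = σ := by funext i; simp
    rw [this]
  have h2 : ∀ σ : ι → Bool, WAL A (fun i => !σ i) = (-1) ^ A.card * WAL A σ := by
    intro σ
    rw [WAL, WAL]
    have : ∀ i ∈ A, chi (!σ i) = (-1) * chi (σ i) := fun i _ => by rw [chi_not]; ring
    rw [Finset.prod_congr rfl this, Finset.prod_mul_distrib, Finset.prod_const]
  simp only [h2] at h1
  rw [Odd.neg_one_pow hA] at h1
  have hneg : fc f A = - fc f A := by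
    nth_rewrite 1 [h1]
    rw [fc, ← Finset.sum_neg_distrib]
    exact Finset.sum_congr rfl fun σ _ => by ring
  linarith


lemma sum_chi_mul_chi (i j : ι) :
    ∑ σ : ι → Bool, chi (σ i) * chi (σ j) = if i = j then (2:ℝ) ^ (Fintype.card ι) else 0 := by
  by_cases h : i = j
  · subst h
    rw [if_pos rfl]
    have : ∀ σ : ι → Bool, chi (σ i) * chi (σ i) = 1 := fun σ => chi_mul_self _
    simp only [this]
    rw [Finset.sum_const, Finset.card_univ, Fintype.card_fun, Fintype.card_bool, nsmul_eq_mul,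
      mul_one]
    push_cast
    ring
  · rw [if_neg h]
    have : ∀ σ : ι → Bool, chi (σ i) * chi (σ j) = WAL {i, j} σ := by
      intro σ
      rw [WAL, Finset.prod_pair h]
    simp only [this]
    exact sum_WAL_eq_zero _ ⟨i, by simp⟩

lemma khintchine (a : ι → ℝ) :
    (2:ℝ) ^ Fintype.card ι * Real.sqrt ((∑ i, a i ^ 2) / 2) ≤
      ∑ σ : ι → Bool, |∑ i, a i * chi (σ i)| := by
  set N : ℝ := (2:ℝ) ^ Fintype.card ι with hN
  have hN0 : 0 < N := by positivity
  set f : (ι → Bool) → ℝ := fun σ => |∑ i, a i * chi (σ i)| with hf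
  -- second moment
  have hS2 : ∑ σ : ι → Bool, f σ ^ 2 = N * ∑ i, a i ^ 2 := by
    have h1 : ∀ σ : ι → Bool, f σ ^ 2 = ∑ i, ∑ j, a i * a j * (chi (σ i) * chi (σ j)) := by
      intro σ
      rw [hf, sq_abs, sq, Finset.sum_mul_sum]
      exact Finset.sum_congr rfl fun i _ => Finset.sum_congr rfl fun j _ => by ring
    simp only [h1]
    rw [Finset.sum_comm]
    have h2 : ∀ i : ι, ∑ σ : ι → Bool, ∑ j, a i * a j * (chi (σ i) * chi (σ j))
        = N * a i ^ 2 := by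
      intro i
      rw [Finset.sum_comm]
      have h3 : ∀ j : ι, ∑ σ : ι → Bool, a i * a j * (chi (σ i) * chi (σ j))
          = a i * a j * (if i = j then N else 0) := by
        intro j; rw [← Finset.mul_sum, sum_chi_mul_chi]
      simp only [h3, mul_ite, mul_zero]
      rw [Finset.sum_ite_eq Finset.univ i (fun j => a i * a j * N)]
      simp [sq]; ring
    simp only [h2]
    rw [← Finset.mul_sum]
  -- evenness
  have heven : ∀ σ : ι → Bool, f (fun i => !σ i) = f σ := by
    intro σ
    rw [hf]
    simp only
    have : ∑ i, a i * chi (!σ i) = -∑ i, a i * chi (σ i) := by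
      rw [← Finset.sum_neg_distrib]
      exact Finset.sum_congr rfl fun i _ => by rw [chi_not]; ring
    rw [this, abs_neg]
  -- derivative bound
  have hbound : ∀ (j : ι) (σ : ι → Bool), ((f σ - f (flip j σ)) / 2) ^ 2 ≤ a j ^ 2 := by
    intro j σ
    have hd : (∑ i, a i * chi (σ i)) - (∑ i, a i * chi (flip j σ i))
        = 2 * a j * chi (σ j) := by
      rw [← Finset.sum_sub_distrib]
      rw [Finset.sum_eq_single j]
      · rw [flip, Function.update_self, chi_not]; ring
      · intro i _ hi
        rw [flip, Function.update_of_ne hi]; ring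
      · intro h; exact absurd (Finset.mem_univ j) h
    have h1 : |f σ - f (flip j σ)| ≤ |2 * a j * chi (σ j)| := by
      have h := abs_abs_sub_abs_le_abs_sub (∑ i, a i * chi (σ i)) (∑ i, a i * chi (flip j σ i))
      rw [hd] at h
      exact h
    have h2 : |2 * a j * chi (σ j)| = 2 * |a j| := by
      rw [abs_mul]
      have : |chi (σ j)| = 1 := by cases σ j <;> simp [chi]
      rw [this, mul_one, abs_mul]
      norm_num
    have h3 : |f σ - f (flip j σ)| ≤ 2 * |a j| := h2 ▸ h1
    have h4 : (f σ - f (flip j σ)) ^ 2 ≤ (2 * |a j|) ^ 2 := by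
      rw [← sq_abs (f σ - f (flip j σ))]
      exact pow_le_pow_left₀ (abs_nonneg _) h3 2
    have h5 : (2 * |a j|) ^ 2 = 4 * a j ^ 2 := by rw [mul_pow, sq_abs]; norm_num
    nlinarith [h4, h5]
  -- sum of |A| * fc^2
  have hkey : ∑ A : Finset ι, (A.card : ℝ) * fc f A ^ 2 ≤ N * (N * ∑ i, a i ^ 2) := by
    have h1 : ∑ A : Finset ι, (A.card : ℝ) * fc f A ^ 2
        = ∑ j : ι, ∑ A ∈ Finset.univ.filter (fun A : Finset ι => j ∈ A), fc f A ^ 2 := by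
      simp only [Finset.sum_filter]
      rw [Finset.sum_comm]
      refine Finset.sum_congr rfl fun A _ => ?_
      rw [Finset.sum_ite_mem, Finset.univ_inter, Finset.sum_const, nsmul_eq_mul]
    rw [h1]
    have h2 : ∀ j : ι, ∑ A ∈ Finset.univ.filter (fun A : Finset ι => j ∈ A), fc f A ^ 2
        ≤ N * (N * a j ^ 2) := by
      intro j
      rw [parseval_d f j]
      have h3 : ∑ σ : ι → Bool, ((f σ - f (flip j σ)) / 2) ^ 2 ≤ N * a j ^ 2 := by
        calc ∑ σ : ι → Bool, ((f σ - f (flip j σ)) / 2) ^ 2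
            ≤ ∑ _σ : ι → Bool, a j ^ 2 := Finset.sum_le_sum fun σ _ => hbound j σ
          _ = N * a j ^ 2 := by
              rw [Finset.sum_const, Finset.card_univ, Fintype.card_fun, Fintype.card_bool,
                nsmul_eq_mul, hN]
              push_cast; ring
      exact mul_le_mul_of_nonneg_left h3 (le_of_lt hN0)
    calc ∑ j : ι, ∑ A ∈ Finset.univ.filter (fun A : Finset ι => j ∈ A), fc f A ^ 2
        ≤ ∑ j : ι, N * (N * a j ^ 2) := Finset.sum_le_sum fun j _ => h2 j
      _ = N * (N * ∑ i, a i ^ 2) := by rw [← Finset.mul_sum, ← Finset.mul_sum]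
  -- lower bound each |A| * fc^2
  have hlb : ∀ A : Finset ι, 2 * fc f A ^ 2 - 2 * (if A = ∅ then fc f A ^ 2 else 0)
      ≤ (A.card : ℝ) * fc f A ^ 2 := by
    intro A
    by_cases hA : A = ∅
    · subst hA; simp
    · rw [if_neg hA]
      by_cases h1 : A.card = 1
      · have : fc f A = 0 := fc_even f heven A (by rw [h1]; exact odd_one)
        simp [this]
      · have hc0 : A.card ≠ 0 := fun h => hA (Finset.card_eq_zero.mp h)
        have h2 : 2 ≤ A.card := by omega
        have h2' : (2:ℝ) ≤ (A.card : ℝ) := by exact_mod_cast h2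
        nlinarith [sq_nonneg (fc f A)]
  have hsum_lb : 2 * (∑ A : Finset ι, fc f A ^ 2) - 2 * fc f ∅ ^ 2
      ≤ ∑ A : Finset ι, (A.card : ℝ) * fc f A ^ 2 := by
    have h1 : ∑ A : Finset ι, (if A = ∅ then fc f A ^ 2 else 0) = fc f ∅ ^ 2 := by
      rw [Finset.sum_ite_eq' Finset.univ ∅ (fun A => fc f A ^ 2)]
      simp
    calc 2 * (∑ A : Finset ι, fc f A ^ 2) - 2 * fc f ∅ ^ 2
        = ∑ A : Finset ι, (2 * fc f A ^ 2 - 2 * (if A = ∅ then fc f A ^ 2 else 0)) := by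
          rw [Finset.sum_sub_distrib, ← Finset.mul_sum, ← Finset.mul_sum, h1]
      _ ≤ ∑ A : Finset ι, (A.card : ℝ) * fc f A ^ 2 := Finset.sum_le_sum fun A _ => hlb A
  have hpars : ∑ A : Finset ι, fc f A ^ 2 = N * (N * ∑ i, a i ^ 2) := by
    rw [parseval, hS2]
  have hfc0 : fc f ∅ = ∑ σ : ι → Bool, f σ := by
    rw [fc]
    exact Finset.sum_congr rfl fun σ _ => by rw [WAL, Finset.prod_empty, mul_one]
  have hT : N * (N * ∑ i, a i ^ 2) ≤ 2 * fc f ∅ ^ 2 := by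
    rw [hpars] at hsum_lb
    linarith [hkey, hsum_lb]
  have hTpos : 0 ≤ ∑ σ : ι → Bool, f σ :=
    Finset.sum_nonneg fun σ _ => abs_nonneg _
  have hQ : (0:ℝ) ≤ (∑ i, a i ^ 2) / 2 := by positivity
  have hfinal : (N * Real.sqrt ((∑ i, a i ^ 2) / 2)) ^ 2 ≤ (∑ σ : ι → Bool, f σ) ^ 2 := by
    rw [mul_pow, Real.sq_sqrt hQ]
    rw [hfc0] at hT
    nlinarith [hT]
  calc N * Real.sqrt ((∑ i, a i ^ 2) / 2)
      = Real.sqrt ((N * Real.sqrt ((∑ i, a i ^ 2) / 2)) ^ 2) := by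
        rw [Real.sqrt_sq (by positivity)]
    _ ≤ Real.sqrt ((∑ σ : ι → Bool, f σ) ^ 2) := Real.sqrt_le_sqrt hfinal
    _ = ∑ σ : ι → Bool, f σ := Real.sqrt_sq hTpos

end PMult

def windowEmb (w h c : ℕ) (r s : ZMod w) (p : Fin h × Fin h × Fin c) :
    ZMod w × ZMod w × Fin c :=
  (r + ((p.1 : ℕ) : ZMod w), s + ((p.2.1 : ℕ) : ZMod w), p.2.2)

set_option maxHeartbeats 1000000 in
open PMult in
/-- Supplement A.4, inner-product lower bound for the sampling distribution `P^multiple`: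
averaging over all window positions `(r, s)` (wraparound indexing in `ZMod w`) and all
`±1`-sign patterns `σ` on the `h × h × c` window, the expected absolute inner product of the
update `δ^{(r,s,σ)}` (value `2ε·σ` on the window, `0` elsewhere) with any direction `v`
satisfies `E|⟨δ, v⟩| ≥ √2 ε h² / w² · ‖v‖₂`. -/
theorem pmultiple_inner_product_lower_bound
    (w h c : ℕ) [NeZero w] (hh : 0 < h) (hc : 0 < c) (hhw : h ≤ w)
    (ε : ℝ) (hε : 0 < ε)
    (δ : ZMod w → ZMod w → (Fin h × Fin h × Fin c → Bool) →
      ZMod w × ZMod w × Fin c → ℝ)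
    (hδ1 : ∀ (r s : ZMod w) (σ : Fin h × Fin h × Fin c → Bool) (k l : Fin h) (i : Fin c),
      δ r s σ (r + ((k : ℕ) : ZMod w), s + ((l : ℕ) : ZMod w), i) =
        2 * ε * (if σ (k, l, i) then 1 else -1))
    (hδ0 : ∀ (r s : ZMod w) (σ : Fin h × Fin h × Fin c → Bool) (a b : ZMod w) (i : Fin c),
      (∀ k l : Fin h, ¬(a = r + ((k : ℕ) : ZMod w) ∧ b = s + ((l : ℕ) : ZMod w))) →
        δ r s σ (a, b, i) = 0)
    (v : ZMod w × ZMod w × Fin c → ℝ) :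
    (1 / ((w : ℝ) ^ 2 * 2 ^ (c * h ^ 2))) *
        ∑ r : ZMod w, ∑ s : ZMod w, ∑ σ : Fin h × Fin h × Fin c → Bool,
          |∑ q : ZMod w × ZMod w × Fin c, δ r s σ q * v q| ≥
      Real.sqrt 2 * ε * (h : ℝ) ^ 2 / (w : ℝ) ^ 2 *
        Real.sqrt (∑ q : ZMod w × ZMod w × Fin c, (v q) ^ 2) := by
  classical
  rw [ge_iff_le]
  set V : ℝ := ∑ q : ZMod w × ZMod w × Fin c, (v q) ^ 2 with hVdef
  have hV0 : 0 ≤ V := Finset.sum_nonneg fun q _ => sq_nonneg _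
  have hwpos : (0:ℝ) < (w:ℝ) := by exact_mod_cast Nat.pos_of_ne_zero (NeZero.ne w)
  -- injectivity of the embedding
  have hinj : ∀ r s : ZMod w, Function.Injective (windowEmb w h c r s) := by
    intro r s p p' hpp
    obtain ⟨k, l, i⟩ := p
    obtain ⟨k', l', i'⟩ := p'
    have h1 : r + ((k : ℕ) : ZMod w) = r + ((k' : ℕ) : ZMod w) ∧
        (s + ((l : ℕ) : ZMod w) = s + ((l' : ℕ) : ZMod w) ∧ i = i') := by
      rw [windowEmb, windowEmb] at hpp
      exact ⟨congrArg Prod.fst hpp, congrArg (Prod.fst ∘ Prod.snd) hpp,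
        congrArg (Prod.snd ∘ Prod.snd) hpp⟩
    have hfin : ∀ a a' : Fin h, ((a : ℕ) : ZMod w) = ((a' : ℕ) : ZMod w) → a = a' := by
      intro a a' haa
      have h2 := congrArg ZMod.val haa
      rw [ZMod.val_cast_of_lt (lt_of_lt_of_le a.2 hhw),
        ZMod.val_cast_of_lt (lt_of_lt_of_le a'.2 hhw)] at h2
      exact Fin.ext h2
    obtain ⟨e1, e2, e3⟩ := h1
    have := hfin k k' (add_left_cancel e1)
    have := hfin l l' (add_left_cancel e2)
    simp_all
  -- window energy
  set S : ZMod w → ZMod w → ℝ :=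
    fun r s => ∑ p : Fin h × Fin h × Fin c, v (windowEmb w h c r s p) ^ 2 with hSdef
  have hS0 : ∀ r s, 0 ≤ S r s := fun r s => Finset.sum_nonneg fun p _ => sq_nonneg _
  -- inner product rewriting
  have hinner : ∀ (r s : ZMod w) (σ : Fin h × Fin h × Fin c → Bool),
      ∑ q : ZMod w × ZMod w × Fin c, δ r s σ q * v q =
        ∑ p : Fin h × Fin h × Fin c,
          (2 * ε * v (windowEmb w h c r s p)) * chi (σ p) := by
    intro r s σ
    have h0 : ∀ q ∈ Finset.univ, q ∉ Finset.univ.image (windowEmb w h c r s) →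
        δ r s σ q * v q = 0 := by
      rintro ⟨A, B, i⟩ _ hq
      have hz : δ r s σ (A, B, i) = 0 := by
        apply hδ0
        intro k l hkl
        exact hq (Finset.mem_image.mpr ⟨(k, l, i), Finset.mem_univ _, by
          rw [windowEmb]
          exact Prod.ext hkl.1.symm (Prod.ext hkl.2.symm rfl)⟩)
      rw [hz, zero_mul]
    rw [← Finset.sum_subset (Finset.subset_univ _) h0,
      Finset.sum_image (fun p _ p' _ hp => hinj r s hp)]
    refine Finset.sum_congr rfl fun p _ => ?_
    obtain ⟨k, l, i⟩ := p
    show δ r s σ (r + ((k : ℕ) : ZMod w), s + ((l : ℕ) : ZMod w), i) * v _ = _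
    rw [hδ1 r s σ k l i]
    show _ = 2 * ε * v (windowEmb w h c r s (k, l, i)) * (if σ (k, l, i) then (1:ℝ) else -1)
    ring
  -- Khintchine per window
  have hcard : Fintype.card (Fin h × Fin h × Fin c) = c * h ^ 2 := by
    simp [Fintype.card_prod, Fintype.card_fin]
    ring
  have hkh : ∀ r s : ZMod w,
      (2:ℝ) ^ (c * h ^ 2) * (Real.sqrt 2 * ε * Real.sqrt (S r s)) ≤
        ∑ σ : Fin h × Fin h × Fin c → Bool,
          |∑ q : ZMod w × ZMod w × Fin c, δ r s σ q * v q| := by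
    intro r s
    have hk := khintchine (fun p : Fin h × Fin h × Fin c => 2 * ε * v (windowEmb w h c r s p))
    rw [hcard] at hk
    have ha : (∑ p : Fin h × Fin h × Fin c, (2 * ε * v (windowEmb w h c r s p)) ^ 2) / 2 =
        2 * ε ^ 2 * S r s := by
      have : ∀ p : Fin h × Fin h × Fin c, (2 * ε * v (windowEmb w h c r s p)) ^ 2 =
          4 * ε ^ 2 * v (windowEmb w h c r s p) ^ 2 := fun p => by ring
      rw [Finset.sum_congr rfl fun p _ => this p, ← Finset.mul_sum, hSdef]
      ring
    rw [ha] at hk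
    have hsq : Real.sqrt (2 * ε ^ 2 * S r s) = Real.sqrt 2 * ε * Real.sqrt (S r s) := by
      rw [show 2 * ε ^ 2 * S r s = (Real.sqrt 2 * ε) ^ 2 * S r s by
          rw [mul_pow, Real.sq_sqrt (by norm_num : (0:ℝ) ≤ 2)],
        Real.sqrt_mul (by positivity) (S r s), Real.sqrt_sq (by positivity)]
    rw [hsq] at hk
    calc (2:ℝ) ^ (c * h ^ 2) * (Real.sqrt 2 * ε * Real.sqrt (S r s))
        ≤ ∑ σ : Fin h × Fin h × Fin c → Bool,
            |∑ p : Fin h × Fin h × Fin c,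
              (2 * ε * v (windowEmb w h c r s p)) * chi (σ p)| := hk
      _ = _ := by
          refine Finset.sum_congr rfl fun σ _ => ?_
          rw [hinner r s σ]
  -- nonnegativity of the big sum
  have hbig0 : 0 ≤ ∑ r : ZMod w, ∑ s : ZMod w, ∑ σ : Fin h × Fin h × Fin c → Bool,
      |∑ q : ZMod w × ZMod w × Fin c, δ r s σ q * v q| :=
    Finset.sum_nonneg fun r _ => Finset.sum_nonneg fun s _ =>
      Finset.sum_nonneg fun σ _ => abs_nonneg _
  by_cases hVz : V = 0
  · rw [hVz, Real.sqrt_zero, mul_zero]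
    exact mul_nonneg (by positivity) hbig0
  have hVpos : 0 < V := lt_of_le_of_ne hV0 (Ne.symm hVz)
  have hSle : ∀ r s : ZMod w, S r s ≤ V := by
    intro r s
    have h1 : ∑ q ∈ Finset.univ.image (windowEmb w h c r s), v q ^ 2
        = ∑ p : Fin h × Fin h × Fin c, v (windowEmb w h c r s p) ^ 2 :=
      Finset.sum_image (fun p _ p' _ hp => hinj r s hp)
    rw [hSdef]
    simp only
    rw [← h1, hVdef]
    exact Finset.sum_le_sum_of_subset_of_nonneg (Finset.subset_univ _)
      (fun q _ _ => sq_nonneg _)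
  have hJ : ∀ r s : ZMod w, S r s / Real.sqrt V ≤ Real.sqrt (S r s) := by
    intro r s
    rw [div_le_iff₀ (Real.sqrt_pos.mpr hVpos)]
    calc S r s = Real.sqrt (S r s) * Real.sqrt (S r s) := (Real.mul_self_sqrt (hS0 r s)).symm
      _ ≤ Real.sqrt (S r s) * Real.sqrt V :=
          mul_le_mul_of_nonneg_left (Real.sqrt_le_sqrt (hSle r s)) (Real.sqrt_nonneg _)
  -- total window energy
  have hSsum : ∑ r : ZMod w, ∑ s : ZMod w, S r s = (h:ℝ) ^ 2 * V := by
    have h1 : ∑ r : ZMod w, ∑ s : ZMod w, S r s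
        = ∑ p : Fin h × Fin h × Fin c, ∑ r : ZMod w, ∑ s : ZMod w,
            v (windowEmb w h c r s p) ^ 2 := by
      rw [hSdef]
      simp only
      calc ∑ r : ZMod w, ∑ s : ZMod w, ∑ p : Fin h × Fin h × Fin c,
            v (windowEmb w h c r s p) ^ 2
          = ∑ r : ZMod w, ∑ p : Fin h × Fin h × Fin c, ∑ s : ZMod w,
              v (windowEmb w h c r s p) ^ 2 :=
            Finset.sum_congr rfl fun r _ => Finset.sum_comm
        _ = ∑ p : Fin h × Fin h × Fin c, ∑ r : ZMod w, ∑ s : ZMod w,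
              v (windowEmb w h c r s p) ^ 2 := Finset.sum_comm
    have h2 : ∀ p : Fin h × Fin h × Fin c,
        ∑ r : ZMod w, ∑ s : ZMod w, v (windowEmb w h c r s p) ^ 2
          = ∑ r : ZMod w, ∑ s : ZMod w, v (r, s, p.2.2) ^ 2 := by
      intro p
      refine Fintype.sum_equiv (Equiv.addRight (((p.1 : ℕ)) : ZMod w)) _ _ (fun r => ?_)
      refine Fintype.sum_equiv (Equiv.addRight (((p.2.1 : ℕ)) : ZMod w)) _ _ (fun s => ?_)
      rfl
    have hVsplit : ∑ i : Fin c, ∑ r : ZMod w, ∑ s : ZMod w, v (r, s, i) ^ 2 = V := by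
      calc ∑ i : Fin c, ∑ r : ZMod w, ∑ s : ZMod w, v (r, s, i) ^ 2
          = ∑ r : ZMod w, ∑ i : Fin c, ∑ s : ZMod w, v (r, s, i) ^ 2 := Finset.sum_comm
        _ = ∑ r : ZMod w, ∑ s : ZMod w, ∑ i : Fin c, v (r, s, i) ^ 2 :=
            Finset.sum_congr rfl fun r _ => Finset.sum_comm
        _ = ∑ r : ZMod w, ∑ q : ZMod w × Fin c, v (r, q.1, q.2) ^ 2 :=
            Finset.sum_congr rfl fun r _ =>
              (Fintype.sum_prod_type (f := fun q : ZMod w × Fin c => v (r, q.1, q.2) ^ 2)).symm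
        _ = V := by
            rw [hVdef]
            exact (Fintype.sum_prod_type
              (f := fun q : ZMod w × ZMod w × Fin c => v q ^ 2)).symm
    rw [h1, Finset.sum_congr rfl fun p _ => h2 p]
    rw [Fintype.sum_prod_type]
    have h3 : ∀ k : Fin h, ∑ q : Fin h × Fin c,
        (∑ r : ZMod w, ∑ s : ZMod w, v (r, s, q.2) ^ 2)
          = (h : ℝ) * ∑ i : Fin c, ∑ r : ZMod w, ∑ s : ZMod w, v (r, s, i) ^ 2 := by
      intro k
      rw [Fintype.sum_prod_type]
      have hc1 : ∀ x : Fin h, (∑ y : Fin c, ∑ r : ZMod w, ∑ s : ZMod w,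
          v (r, s, ((x, y) : Fin h × Fin c).2) ^ 2)
            = ∑ i : Fin c, ∑ r : ZMod w, ∑ s : ZMod w, v (r, s, i) ^ 2 :=
        fun x => Finset.sum_congr rfl fun y _ => rfl
      rw [Finset.sum_congr rfl fun x _ => hc1 x, Finset.sum_const, Finset.card_univ,
        Fintype.card_fin, nsmul_eq_mul]
    rw [Finset.sum_congr rfl fun k _ => h3 k, Finset.sum_const, Finset.card_univ,
      Fintype.card_fin, nsmul_eq_mul, hVsplit]
    ring
  -- Jensen: sum of square roots
  have hstep : (h:ℝ) ^ 2 * Real.sqrt V ≤ ∑ r : ZMod w, ∑ s : ZMod w, Real.sqrt (S r s) := by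
    calc (h:ℝ) ^ 2 * Real.sqrt V = ((h:ℝ) ^ 2 * V) / Real.sqrt V := by
          rw [mul_div_assoc, Real.div_sqrt]
      _ = ∑ r : ZMod w, ∑ s : ZMod w, S r s / Real.sqrt V := by
          rw [← hSsum]
          simp [Finset.sum_div]
      _ ≤ ∑ r : ZMod w, ∑ s : ZMod w, Real.sqrt (S r s) :=
          Finset.sum_le_sum fun r _ => Finset.sum_le_sum fun s _ => hJ r s
  -- final assembly
  have hmain : (2:ℝ) ^ (c * h ^ 2) * (Real.sqrt 2 * ε * ((h:ℝ) ^ 2 * Real.sqrt V)) ≤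
      ∑ r : ZMod w, ∑ s : ZMod w, ∑ σ : Fin h × Fin h × Fin c → Bool,
        |∑ q : ZMod w × ZMod w × Fin c, δ r s σ q * v q| := by
    calc (2:ℝ) ^ (c * h ^ 2) * (Real.sqrt 2 * ε * ((h:ℝ) ^ 2 * Real.sqrt V))
        ≤ (2:ℝ) ^ (c * h ^ 2) * (Real.sqrt 2 * ε *
            ∑ r : ZMod w, ∑ s : ZMod w, Real.sqrt (S r s)) := by
          refine mul_le_mul_of_nonneg_left (mul_le_mul_of_nonneg_left hstep ?_) ?_
          · positivity
          · positivity
      _ = ∑ r : ZMod w, ∑ s : ZMod w,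
            (2:ℝ) ^ (c * h ^ 2) * (Real.sqrt 2 * ε * Real.sqrt (S r s)) := by
          simp [Finset.mul_sum]
      _ ≤ _ := Finset.sum_le_sum fun r _ => Finset.sum_le_sum fun s _ => hkh r s
  have h2E : (0:ℝ) < (2:ℝ) ^ (c * h ^ 2) := by positivity
  calc Real.sqrt 2 * ε * (h : ℝ) ^ 2 / (w : ℝ) ^ 2 * Real.sqrt V
      = (1 / ((w : ℝ) ^ 2 * 2 ^ (c * h ^ 2))) *
          ((2:ℝ) ^ (c * h ^ 2) * (Real.sqrt 2 * ε * ((h:ℝ) ^ 2 * Real.sqrt V))) := by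
        field_simp
    _ ≤ (1 / ((w : ℝ) ^ 2 * 2 ^ (c * h ^ 2))) *
          ∑ r : ZMod w, ∑ s : ZMod w, ∑ σ : Fin h × Fin h × Fin c → Bool,
            |∑ q : ZMod w × ZMod w × Fin c, δ r s σ q * v q| := by
        refine mul_le_mul_of_nonneg_left hmain ?_
        positivity
end

section
/- For every n ≥ 1 and every a ∈ ℝ^n, the average of |Σ_{i=1}^n σ_i a_i| over all sign vectors σ ∈ {−1, 1}^n satisfies (1/2^n) · Σ_{σ ∈ {−1,1}^n} |Σ_{i=1}^n σ_i a_i| ≥ (1/√2) · (Σ_{i=1}^n a_i²)^{1/2}. -/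
open Finset

namespace Khin

variable {n : ℕ}

def r (σ : Fin n → Bool) (i : Fin n) : ℝ := if σ i then 1 else -1

def S (a : Fin n → ℝ) (σ : Fin n → Bool) : ℝ := ∑ i, r σ i * a i

def f (a : Fin n → ℝ) (σ : Fin n → Bool) : ℝ := |S a σ|

def W (A : Finset (Fin n)) (σ : Fin n → Bool) : ℝ := ∏ i ∈ A, r σ i

def coef (a : Fin n → ℝ) (A : Finset (Fin n)) : ℝ := ∑ σ : Fin n → Bool, f a σ * W A σ

def flip (i : Fin n) (σ : Fin n → Bool) : Fin n → Bool := Function.update σ i (!σ i)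

lemma r_mul_self (σ : Fin n → Bool) (i : Fin n) : r σ i * r σ i = 1 := by
  unfold r; by_cases h : σ i <;> simp [h]

lemma r_flip_same (i : Fin n) (σ : Fin n → Bool) : r (flip i σ) i = - r σ i := by
  simp only [r, flip, Function.update_self]
  by_cases h : σ i <;> simp [h]

lemma r_flip_ne {i j : Fin n} (h : j ≠ i) (σ : Fin n → Bool) : r (flip i σ) j = r σ j := by
  simp only [r, flip, Function.update_of_ne h]

lemma flip_flip (i : Fin n) (σ : Fin n → Bool) : flip i (flip i σ) = σ := by
  funext j
  by_cases h : j = i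
  · subst h; simp [flip, Function.update_self]
  · simp [flip, Function.update_of_ne h]

lemma flip_bij (i : Fin n) : Function.Bijective (flip (n := n) i) :=
  Function.Involutive.bijective (flip_flip i)

lemma r_neg (σ : Fin n → Bool) (i : Fin n) : r (fun j => !σ j) i = - r σ i := by
  unfold r; by_cases h : σ i <;> simp [h]

lemma neg_invol : Function.Involutive (fun (σ : Fin n → Bool) => (fun j => !σ j)) := by
  intro σ; funext j; simp

-- sum over all sign vectors of a product over coordinates
lemma sum_bool_prod (y : Fin n → Bool → ℝ) :
    ∑ σ : Fin n → Bool, ∏ i, y i (σ i) = ∏ i, (y i true + y i false) := by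
  have : ∏ i : Fin n, (y i true + y i false) = ∏ i : Fin n, ∑ b : Bool, y i b := by
    refine Finset.prod_congr rfl fun i _ => ?_
    rw [Fintype.sum_bool]
  rw [this, Finset.prod_univ_sum, Fintype.piFinset_univ]


lemma sum_subsets_prod (y : Fin n → ℝ) :
    ∑ A : Finset (Fin n), ∏ i ∈ A, y i = ∏ i, (y i + 1) := by
  rw [Finset.prod_add]
  simp [Finset.powerset_univ]

lemma sum_W (g : Fin n → ℝ) (σ τ : Fin n → Bool) :
    ∑ A : Finset (Fin n), (∏ i ∈ A, g i) * (W A σ * W A τ) =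
      ∏ i, (g i * (r σ i * r τ i) + 1) := by
  rw [← sum_subsets_prod (fun i => g i * (r σ i * r τ i))]
  refine Finset.sum_congr rfl fun A _ => ?_
  rw [W, W, ← Finset.prod_mul_distrib, ← Finset.prod_mul_distrib]

lemma orth (σ τ : Fin n → Bool) :
    ∑ A : Finset (Fin n), W A σ * W A τ = if σ = τ then (2 ^ n : ℝ) else 0 := by
  have h := sum_W (fun _ => (1:ℝ)) σ τ
  simp only [Finset.prod_const_one, one_mul] at h
  rw [h]
  by_cases hst : σ = τ
  · subst hst
    simp only [if_pos rfl]
    rw [Finset.prod_congr rfl fun i _ => by rw [r_mul_self]]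
    norm_num
  · rw [if_neg hst]
    obtain ⟨i, hi⟩ : ∃ i, σ i ≠ τ i := by
      by_contra h'
      push_neg at h'
      exact hst (funext h')
    refine Finset.prod_eq_zero (Finset.mem_univ i) ?_
    unfold r
    cases hσ : σ i <;> cases hτ : τ i <;> simp_all

lemma orth' (i₀ : Fin n) (σ τ : Fin n → Bool) :
    ∑ A : Finset (Fin n), (if i₀ ∈ A then (-1:ℝ) else 1) * (W A σ * W A τ) =
      if τ = flip i₀ σ then (2 ^ n : ℝ) else 0 := by
  have hg : ∀ A : Finset (Fin n),
      (if i₀ ∈ A then (-1:ℝ) else 1) = ∏ i ∈ A, (if i₀ = i then (-1:ℝ) else 1) := by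
    intro A; rw [Finset.prod_ite_eq]
  have h := sum_W (fun i => if i₀ = i then (-1:ℝ) else 1) σ τ
  rw [show (∑ A : Finset (Fin n), (if i₀ ∈ A then (-1:ℝ) else 1) * (W A σ * W A τ))
      = ∑ A : Finset (Fin n), (∏ i ∈ A, (if i₀ = i then (-1:ℝ) else 1)) * (W A σ * W A τ) from
    Finset.sum_congr rfl fun A _ => by rw [← hg], h]
  by_cases hst : τ = flip i₀ σ
  · subst hst
    rw [if_pos rfl]
    have : ∀ i : Fin n, ((if i₀ = i then (-1:ℝ) else 1) * (r σ i * r (flip i₀ σ) i) + 1) = 2 := by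
      intro i
      by_cases h : i = i₀
      · subst h
        rw [if_pos rfl, r_flip_same]
        have := r_mul_self σ i; nlinarith [r_mul_self σ i]
      · rw [if_neg (fun h' => h h'.symm), r_flip_ne h, one_mul, r_mul_self]
        norm_num
    rw [Finset.prod_congr rfl fun i _ => this i]
    simp
  · rw [if_neg hst]
    obtain ⟨i, hi⟩ : ∃ i, τ i ≠ flip i₀ σ i := by
      by_contra h'
      push_neg at h'
      exact hst (funext h')
    refine Finset.prod_eq_zero (Finset.mem_univ i) ?_
    by_cases h : i = i₀
    · subst h
      rw [if_pos rfl]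
      have h2 : τ i ≠ !σ i := by simpa [flip, Function.update_self] using hi
      unfold r
      cases hσ : σ i <;> cases hτ : τ i <;> simp_all
    · rw [if_neg (fun h' => h h'.symm), one_mul]
      have h2 : τ i ≠ σ i := by simpa [flip, Function.update_of_ne h] using hi
      unfold r
      cases hσ : σ i <;> cases hτ : τ i <;> simp_all


lemma expand (a : Fin n → ℝ) (c : Finset (Fin n) → ℝ) :
    ∑ A : Finset (Fin n), c A * (coef a A)^2
      = ∑ σ : Fin n → Bool, ∑ τ : Fin n → Bool,
          f a σ * f a τ * (∑ A : Finset (Fin n), c A * (W A σ * W A τ)) := by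
  have h1 : ∀ A, c A * (coef a A)^2
      = ∑ σ : Fin n → Bool, ∑ τ : Fin n → Bool,
          c A * ((f a σ * W A σ) * (f a τ * W A τ)) := by
    intro A
    rw [coef, sq, Finset.sum_mul_sum, Finset.mul_sum]
    exact Finset.sum_congr rfl fun σ _ => by rw [Finset.mul_sum]
  rw [Finset.sum_congr rfl fun A _ => h1 A, Finset.sum_comm]
  refine Finset.sum_congr rfl fun σ _ => ?_
  rw [Finset.sum_comm]
  refine Finset.sum_congr rfl fun τ _ => ?_
  rw [Finset.mul_sum]
  exact Finset.sum_congr rfl fun A _ => by ring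

lemma parseval (a : Fin n → ℝ) :
    ∑ A : Finset (Fin n), (coef a A)^2 = 2^n * ∑ σ : Fin n → Bool, (f a σ)^2 := by
  have h := expand a (fun _ => 1)
  simp only [one_mul] at h
  rw [h]
  have h2 : ∀ σ : Fin n → Bool, ∑ τ : Fin n → Bool,
      f a σ * f a τ * (∑ A : Finset (Fin n), W A σ * W A τ) = 2^n * (f a σ)^2 := by
    intro σ
    rw [Finset.sum_congr rfl fun τ _ => by rw [orth σ τ]]
    rw [Finset.sum_congr rfl (fun τ _ => by
      rw [mul_ite, mul_zero] :
      ∀ τ ∈ Finset.univ, f a σ * f a τ * (if σ = τ then (2^n:ℝ) else 0)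
        = if σ = τ then f a σ * f a τ * 2^n else 0)]
    rw [Finset.sum_ite_eq, if_pos (Finset.mem_univ σ)]
    ring
  rw [Finset.sum_congr rfl fun σ _ => h2 σ, ← Finset.mul_sum]

lemma dirich (a : Fin n → ℝ) (i₀ : Fin n) :
    ∑ A : Finset (Fin n), (if i₀ ∈ A then (-1:ℝ) else 1) * (coef a A)^2
      = 2^n * ∑ σ : Fin n → Bool, f a σ * f a (flip i₀ σ) := by
  rw [expand a (fun A => if i₀ ∈ A then (-1:ℝ) else 1)]
  have h2 : ∀ σ : Fin n → Bool, ∑ τ : Fin n → Bool,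
      f a σ * f a τ * (∑ A : Finset (Fin n), (if i₀ ∈ A then (-1:ℝ) else 1) * (W A σ * W A τ))
        = 2^n * (f a σ * f a (flip i₀ σ)) := by
    intro σ
    rw [Finset.sum_congr rfl fun τ _ => by rw [orth' i₀ σ τ]]
    rw [Finset.sum_congr rfl (fun τ _ => by
      rw [mul_ite, mul_zero] :
      ∀ τ ∈ Finset.univ, f a σ * f a τ * (if τ = flip i₀ σ then (2^n:ℝ) else 0)
        = if τ = flip i₀ σ then f a σ * f a τ * 2^n else 0)]
    rw [Finset.sum_ite_eq', if_pos (Finset.mem_univ _)]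
    ring
  rw [Finset.sum_congr rfl fun σ _ => h2 σ, ← Finset.mul_sum]


lemma f_neg (a : Fin n → ℝ) (σ : Fin n → Bool) : f a (fun j => !σ j) = f a σ := by
  unfold f S
  rw [(Finset.sum_congr rfl fun i _ => by rw [r_neg] :
    (∑ i, r (fun j => !σ j) i * a i) = ∑ i, -r σ i * a i)]
  rw [show (∑ i, -r σ i * a i) = -∑ i, r σ i * a i by rw [← Finset.sum_neg_distrib]; exact Finset.sum_congr rfl fun i _ => by ring]
  exact abs_neg _

lemma W_neg (A : Finset (Fin n)) (σ : Fin n → Bool) :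
    W A (fun j => !σ j) = (-1)^A.card * W A σ := by
  unfold W
  rw [(Finset.prod_congr rfl fun i _ => by rw [r_neg] :
    (∏ i ∈ A, r (fun j => !σ j) i) = ∏ i ∈ A, -r σ i)]
  rw [Finset.prod_congr rfl fun i (_ : i ∈ A) => (by ring : -r σ i = (-1) * r σ i),
    Finset.prod_mul_distrib, Finset.prod_const]

lemma coef_odd (a : Fin n → ℝ) (A : Finset (Fin n)) (h : ¬ Even A.card) : coef a A = 0 := by
  have key : coef a A = (-1)^A.card * coef a A := by
    unfold coef
    rw [Finset.mul_sum]
    refine Fintype.sum_bijective (fun σ => (fun j => !σ j)) neg_invol.bijective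
      (fun σ => f a σ * W A σ) (fun σ => (-1)^A.card * (f a σ * W A σ)) (fun σ => ?_)
    show f a σ * W A σ = (-1)^A.card * (f a (fun j => !σ j) * W A (fun j => !σ j))
    rw [f_neg, W_neg]
    have h2 : ((-1:ℝ))^A.card * ((-1:ℝ))^A.card = 1 := by
      rw [← pow_add]; exact Even.neg_one_pow ⟨A.card, rfl⟩
    linear_combination (-(f a σ * W A σ)) * h2
  rw [Odd.neg_one_pow (Nat.not_even_iff_odd.mp h)] at key
  linarith

lemma S_flip (a : Fin n → ℝ) (i : Fin n) (σ : Fin n → Bool) :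
    S a (flip i σ) = S a σ - 2 * r σ i * a i := by
  unfold S
  have h : ∀ j : Fin n, r (flip i σ) j * a j
      = r σ j * a j - (if j = i then 2 * r σ i * a i else 0) := by
    intro j
    by_cases hj : j = i
    · subst hj; rw [if_pos rfl, r_flip_same]; ring
    · rw [if_neg hj, r_flip_ne hj, sub_zero]
  rw [Finset.sum_congr rfl fun j _ => h j, Finset.sum_sub_distrib,
    Finset.sum_ite_eq' Finset.univ i (fun _ => 2 * r σ i * a i), if_pos (Finset.mem_univ i)]

lemma diff_bound (a : Fin n → ℝ) (i : Fin n) (σ : Fin n → Bool) :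
    (f a σ - f a (flip i σ))^2 ≤ 4 * (a i)^2 := by
  have h1 : |f a σ - f a (flip i σ)| ≤ |S a σ - S a (flip i σ)| := abs_abs_sub_abs_le_abs_sub _ _
  have h2 : |S a σ - S a (flip i σ)| = 2 * |r σ i| * |a i| := by
    rw [S_flip]; rw [show S a σ - (S a σ - 2 * r σ i * a i) = 2 * r σ i * a i by ring]
    rw [abs_mul, abs_mul]; norm_num
  have h3 : |r σ i| = 1 := by unfold r; by_cases h : σ i <;> simp [h]
  rw [h3, mul_one] at h2
  have h4 : |f a σ - f a (flip i σ)| ≤ 2 * |a i| := by rw [← h2]; exact h1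
  calc (f a σ - f a (flip i σ))^2 = |f a σ - f a (flip i σ)|^2 := (sq_abs _).symm
    _ ≤ (2 * |a i|)^2 := by
        exact pow_le_pow_left₀ (abs_nonneg _) h4 2
    _ = 4 * (a i)^2 := by rw [mul_pow, sq_abs]; ring

lemma sum_r_mul_r (i j : Fin n) :
    ∑ σ : Fin n → Bool, r σ i * r σ j = if i = j then (2^n : ℝ) else 0 := by
  by_cases h : i = j
  · subst h; rw [if_pos rfl]
    rw [Finset.sum_congr rfl fun σ _ => r_mul_self σ i]
    simp
  · rw [if_neg h]
    have hrev : ∑ σ : Fin n → Bool, r σ i * r σ j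
        = ∑ σ : Fin n → Bool, -(r σ i * r σ j) := by
      refine Fintype.sum_bijective (flip i) (flip_bij i) _ _ (fun σ => ?_)
      rw [r_flip_same, r_flip_ne (fun hh => h hh.symm)]
      ring
    rw [Finset.sum_neg_distrib] at hrev
    linarith

lemma sum_f_sq (a : Fin n → ℝ) :
    ∑ σ : Fin n → Bool, (f a σ)^2 = 2^n * ∑ i, (a i)^2 := by
  have h1 : ∀ σ : Fin n → Bool, (f a σ)^2 = ∑ i, ∑ j, a i * a j * (r σ i * r σ j) := by
    intro σ
    rw [f, sq_abs, S, sq, Finset.sum_mul_sum]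
    exact Finset.sum_congr rfl fun i _ => Finset.sum_congr rfl fun j _ => by ring
  rw [Finset.sum_congr rfl fun σ _ => h1 σ, Finset.sum_comm]
  have h2 : ∀ i : Fin n, ∑ σ : Fin n → Bool, ∑ j, a i * a j * (r σ i * r σ j)
      = 2^n * (a i)^2 := by
    intro i
    rw [Finset.sum_comm]
    have h3 : ∀ j : Fin n, ∑ σ : Fin n → Bool, a i * a j * (r σ i * r σ j)
        = if i = j then a i * a j * 2^n else 0 := by
      intro j
      rw [← Finset.mul_sum, sum_r_mul_r, mul_ite, mul_zero]
    rw [Finset.sum_congr rfl fun j _ => h3 j, Finset.sum_ite_eq, if_pos (Finset.mem_univ i)]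
    ring
  rw [Finset.sum_congr rfl fun i _ => h2 i, ← Finset.mul_sum]


lemma level_bound (a : Fin n → ℝ) (i : Fin n) :
    ∑ A : Finset (Fin n), (if i ∈ A then (1:ℝ) else 0) * (coef a A)^2 ≤ 4^n * (a i)^2 := by
  set T := ∑ A : Finset (Fin n), (if i ∈ A then (1:ℝ) else 0) * (coef a A)^2 with hT
  have hp := parseval a
  have hd := dirich a i
  have hflipsq : ∑ σ : Fin n → Bool, (f a (flip i σ))^2 = ∑ σ : Fin n → Bool, (f a σ)^2 :=
    Fintype.sum_bijective (flip i) (flip_bij i)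
      (fun σ => (f a (flip i σ))^2) (fun τ => (f a τ)^2) (fun σ => rfl)
  have hexp : ∑ σ : Fin n → Bool, (f a σ - f a (flip i σ))^2
      = 2 * (∑ σ : Fin n → Bool, (f a σ)^2) - 2 * ∑ σ : Fin n → Bool, f a σ * f a (flip i σ) := by
    have : ∀ σ : Fin n → Bool, (f a σ - f a (flip i σ))^2
        = ((f a σ)^2 + (f a (flip i σ))^2) - 2 * (f a σ * f a (flip i σ)) := by
      intro σ; ring
    rw [Finset.sum_congr rfl fun σ _ => this σ, Finset.sum_sub_distrib,
      Finset.sum_add_distrib, hflipsq, ← Finset.mul_sum]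
    ring
  have key : 2 * T = (∑ A : Finset (Fin n), (coef a A)^2)
      - ∑ A : Finset (Fin n), (if i ∈ A then (-1:ℝ) else 1) * (coef a A)^2 := by
    rw [hT, ← Finset.sum_sub_distrib, Finset.mul_sum]
    refine Finset.sum_congr rfl fun A _ => ?_
    by_cases h : i ∈ A <;> simp [h] <;> ring
  have hdiff : ∑ σ : Fin n → Bool, (f a σ - f a (flip i σ))^2 ≤ 2^n * (4 * (a i)^2) := by
    calc ∑ σ : Fin n → Bool, (f a σ - f a (flip i σ))^2
        ≤ ∑ _σ : Fin n → Bool, 4 * (a i)^2 :=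
          Finset.sum_le_sum fun σ _ => diff_bound a i σ
      _ = 2^n * (4 * (a i)^2) := by
          rw [Finset.sum_const, Finset.card_univ]
          simp [nsmul_eq_mul]
  have e1 : 4 * T = 2^n * ∑ σ : Fin n → Bool, (f a σ - f a (flip i σ))^2 := by
    rw [hexp]
    rw [hp, hd] at key
    linarith [key]
  have e2 : (2:ℝ)^n * ∑ σ : Fin n → Bool, (f a σ - f a (flip i σ))^2
      ≤ 2^n * (2^n * (4 * (a i)^2)) :=
    mul_le_mul_of_nonneg_left hdiff (by positivity)
  have e3 : (4:ℝ)^n = 2^n * 2^n := by rw [← mul_pow]; norm_num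
  rw [e3]; linarith [e1, e2]

lemma card_bound (a : Fin n → ℝ) :
    ∑ A : Finset (Fin n), (A.card : ℝ) * (coef a A)^2 ≤ 4^n * ∑ i, (a i)^2 := by
  have h1 : ∀ A : Finset (Fin n), (A.card : ℝ) * (coef a A)^2
      = ∑ i, (if i ∈ A then (1:ℝ) else 0) * (coef a A)^2 := by
    intro A
    rw [← Finset.sum_mul]
    congr 1
    rw [Finset.sum_boole]
    congr 1
    simp [Finset.filter_mem_eq_inter]
  rw [Finset.sum_congr rfl fun A _ => h1 A, Finset.sum_comm, Finset.mul_sum]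
  exact Finset.sum_le_sum fun i _ => level_bound a i

lemma coef_empty (a : Fin n → ℝ) : coef a ∅ = ∑ σ : Fin n → Bool, f a σ := by
  unfold coef W
  simp

lemma coef_empty_nonneg (a : Fin n → ℝ) : 0 ≤ coef a ∅ := by
  rw [coef_empty]
  exact Finset.sum_nonneg fun σ _ => abs_nonneg _

lemma main_ineq (a : Fin n → ℝ) :
    4^n * ∑ i, (a i)^2 ≤ 2 * (coef a ∅)^2 := by
  classical
  have hpar : ∑ A : Finset (Fin n), (coef a A)^2 = 4^n * ∑ i, (a i)^2 := by
    rw [parseval, sum_f_sq, ← mul_assoc, ← mul_pow]; norm_num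
  have hcard : ∑ A : Finset (Fin n), ((A.card : ℝ) - 1) * (coef a A)^2 ≤ 0 := by
    have h1 := card_bound a
    rw [← hpar] at h1
    have h2 : ∑ A : Finset (Fin n), ((A.card : ℝ) - 1) * (coef a A)^2
        = (∑ A : Finset (Fin n), (A.card : ℝ) * (coef a A)^2)
          - ∑ A : Finset (Fin n), (coef a A)^2 := by
      rw [← Finset.sum_sub_distrib]
      exact Finset.sum_congr rfl fun A _ => by ring
    rw [h2]; linarith
  have hsplit : ∀ g : Finset (Fin n) → ℝ,
      ∑ A : Finset (Fin n), g A = (∑ A ∈ Finset.univ.erase ∅, g A) + g ∅ := fun g =>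
    (Finset.sum_erase_add Finset.univ g (Finset.mem_univ ∅)).symm
  have hterm : ∀ A ∈ Finset.univ.erase (∅ : Finset (Fin n)),
      (coef a A)^2 ≤ ((A.card : ℝ) - 1) * (coef a A)^2 := by
    intro A hA
    by_cases hc : coef a A = 0
    · simp [hc]
    · have hne : A ≠ ∅ := (Finset.mem_erase.mp hA).1
      have heven : Even A.card := by
        by_contra h
        exact hc (coef_odd a A h)
      have hpos : 1 ≤ A.card := Finset.card_pos.mpr (Finset.nonempty_of_ne_empty hne)
      have h2 : 2 ≤ A.card := by
        rcases heven with ⟨k, hk⟩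
        omega
      have hcast : (2:ℝ) ≤ (A.card : ℝ) := by exact_mod_cast h2
      nlinarith [sq_nonneg (coef a A)]
  have h3 : ∑ A ∈ Finset.univ.erase (∅ : Finset (Fin n)), (coef a A)^2 ≤ (coef a ∅)^2 := by
    have h4 := Finset.sum_le_sum hterm
    have h5 : ∑ A ∈ Finset.univ.erase (∅ : Finset (Fin n)), ((A.card : ℝ) - 1) * (coef a A)^2
        = (∑ A : Finset (Fin n), ((A.card : ℝ) - 1) * (coef a A)^2) + (coef a ∅)^2 := by
      rw [hsplit (fun A => ((A.card : ℝ) - 1) * (coef a A)^2)]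
      simp
    rw [h5] at h4
    linarith [hcard]
  have h6 := hsplit (fun A => (coef a A)^2)
  rw [← hpar]
  linarith

end Khin

/-- Khintchine inequality (first-moment lower bound with the optimal constant `1/√2`):
the average of `|Σ σ_i a_i|` over all sign vectors `σ ∈ {−1,1}^n` is at least
`(1/√2) · ‖a‖₂`. -/
theorem khintchine_lower_bound
    (n : ℕ) (hn : 1 ≤ n) (a : Fin n → ℝ) :
    (1 / 2 ^ n) * ∑ σ : Fin n → Bool, |∑ i, (if σ i then (1 : ℝ) else -1) * a i| ≥
      (1 / Real.sqrt 2) * Real.sqrt (∑ i, (a i) ^ 2) := by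
  have hmain := Khin.main_ineq a
  have hnn := Khin.coef_empty_nonneg a
  have hsum : ∑ σ : Fin n → Bool, |∑ i, (if σ i then (1 : ℝ) else -1) * a i|
      = Khin.coef a ∅ := by
    rw [Khin.coef_empty]
    rfl
  rw [hsum]
  set c := Khin.coef a ∅ with hc
  set K := ∑ i, (a i)^2 with hK
  have hKnn : 0 ≤ K := Finset.sum_nonneg fun i _ => sq_nonneg _
  have h2pos : (0:ℝ) < 2^n := by positivity
  have hrhs : (1 / Real.sqrt 2) * Real.sqrt K = Real.sqrt (K / 2) := by
    rw [Real.sqrt_div hKnn 2, one_div, inv_mul_eq_div]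
  have hlhs : (1 / 2^n) * c = Real.sqrt ((c / 2^n)^2) := by
    rw [Real.sqrt_sq (by positivity)]
    ring
  rw [hrhs, hlhs]
  apply Real.sqrt_le_sqrt
  rw [div_pow, div_le_div_iff₀ (by norm_num) (by positivity)]
  have h4 : ((2:ℝ)^n)^2 = 4^n := by rw [← pow_mul, pow_mul']; norm_num
  rw [h4]
  linarith
end

section
/- Let h ≥ 1 and w = m·h for an integer m ≥ 1, and let ε > 0. Partition {1, …, w} × {1, …, w} into the m² blocks B_{(r,s)} = {rh+1, …, (r+1)h} × {sh+1, …, (s+1)h} for r, s ∈ {0, …, m−1}. For a block (r,s) and signs σ ∈ {−1, 1}^{B_{(r,s)}}, let δ^{(r,s,σ)} ∈ ℝ^{w × w} equal 2ε·σ_{k,l} at each (k,l) ∈ B_{(r,s)} and 0 elsewhere. Then for every v ∈ ℝ^{w × w}, the expectation of |⟨δ, v⟩| under the uniform distribution over (r, s) and over σ ∈ {−1,1}^{h×h} satisfies E|⟨δ, v⟩| ≤ 2ε · (h/w) · ‖v‖₂. -/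
open Finset

private lemma sum_Icc_one (w : ℕ) (f : ℕ → ℝ) :
    ∑ i ∈ Icc 1 w, f i = ∑ i ∈ range w, f (1 + i) := by
  rw [← Finset.Ico_add_one_right_eq_Icc, Finset.sum_Ico_eq_sum_range]
  simp

private lemma sum_Icc_shift (a n : ℕ) (f : ℕ → ℝ) :
    ∑ k ∈ Icc (a + 1) (a + n), f k = ∑ i ∈ range n, f (a + 1 + i) := by
  rw [← Finset.Ico_add_one_right_eq_Icc, Finset.sum_Ico_eq_sum_range]
  have : a + n + 1 - (a + 1) = n := by omega
  rw [this]

private lemma sum_range_mul' (f : ℕ → ℝ) (m h : ℕ) :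
    ∑ k ∈ range (m * h), f k = ∑ r ∈ range m, ∑ i ∈ range h, f (r * h + i) := by
  induction m with
  | zero => simp
  | succ n ih =>
      rw [Nat.succ_mul, Finset.sum_range_add, ih, Finset.sum_range_succ]

private lemma block_decomp (m h : ℕ) (g : ℕ → ℕ → ℝ) :
    ∑ r ∈ range m, ∑ s ∈ range m, ∑ i ∈ range h, ∑ j ∈ range h,
        g (r * h + 1 + i) (s * h + 1 + j) =
      ∑ k ∈ Icc 1 (m * h), ∑ l ∈ Icc 1 (m * h), g k l := by
  rw [sum_Icc_one]
  simp only [sum_Icc_one, sum_range_mul']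
  refine Finset.sum_congr rfl fun r _ => ?_
  conv_rhs => rw [Finset.sum_comm]
  refine Finset.sum_congr rfl fun s _ => Finset.sum_congr rfl fun i _ =>
    Finset.sum_congr rfl fun j _ => ?_
  rw [show r * h + 1 + i = 1 + (r * h + i) by omega,
    show s * h + 1 + j = 1 + (s * h + j) by omega]

private lemma sum_sqrt_le (m : ℕ) (Q : ℕ → ℕ → ℝ) (hQ : ∀ r s, 0 ≤ Q r s) :
    ∑ r ∈ range m, ∑ s ∈ range m, Real.sqrt (Q r s) ≤
      (m : ℝ) * Real.sqrt (∑ r ∈ range m, ∑ s ∈ range m, Q r s) := by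
  have hCS := Finset.sum_mul_sq_le_sq_mul_sq ((range m) ×ˢ (range m))
    (fun _ => (1 : ℝ)) (fun p => Real.sqrt (Q p.1 p.2))
  simp only [one_mul, one_pow, Finset.sum_const, Finset.card_product, Finset.card_range,
    nsmul_eq_mul, mul_one, Real.sq_sqrt (hQ _ _)] at hCS
  rw [Finset.sum_product, Finset.sum_product] at hCS
  have hQt : (0 : ℝ) ≤ ∑ r ∈ range m, ∑ s ∈ range m, Q r s :=
    Finset.sum_nonneg fun r _ => Finset.sum_nonneg fun s _ => hQ r s
  have hge : (0 : ℝ) ≤ ∑ r ∈ range m, ∑ s ∈ range m, Real.sqrt (Q r s) :=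
    Finset.sum_nonneg fun r _ => Finset.sum_nonneg fun s _ => Real.sqrt_nonneg _
  refine le_of_pow_le_pow_left₀ two_ne_zero (by positivity) ?_
  rw [mul_pow, Real.sq_sqrt hQt]
  calc (∑ r ∈ range m, ∑ s ∈ range m, Real.sqrt (Q r s)) ^ 2
      ≤ (m * m : ℝ) * (∑ r ∈ range m, ∑ s ∈ range m, Q r s) := by push_cast at hCS ⊢; linarith
    _ = (m : ℝ) ^ 2 * (∑ r ∈ range m, ∑ s ∈ range m, Q r s) := by ring

private lemma sgn_orth {ι : Type*} [Fintype ι] [DecidableEq ι] (i j : ι) (hij : i ≠ j) :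
    ∑ σ : ι → Bool, ((if σ i then (1:ℝ) else -1) * (if σ j then 1 else -1)) = 0 := by
  have hinv : Function.Involutive (fun σ : ι → Bool => Function.update σ i (!σ i)) := by
    intro σ; funext x
    by_cases hx : x = i <;> simp [Function.update, hx]
  set e := hinv.toPerm
  have hsum := Equiv.sum_comp e
    (fun σ : ι → Bool => (if σ i then (1:ℝ) else -1) * (if σ j then 1 else -1))
  have hneg : ∀ σ : ι → Bool,
      ((if (e σ) i then (1:ℝ) else -1) * (if (e σ) j then 1 else -1)) =
        -((if σ i then (1:ℝ) else -1) * (if σ j then 1 else -1)) := by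
    intro σ
    have h1 : (e σ) i = !σ i := by simp [e, Function.Involutive.toPerm]
    have h2 : (e σ) j = σ j := by
      simp [e, Function.Involutive.toPerm, Function.update_of_ne (fun hc => hij hc.symm)]
    rw [h1, h2]
    by_cases hb : σ i <;> by_cases hc : σ j <;> simp [hb, hc]
  rw [Finset.sum_congr rfl (fun σ _ => hneg σ), Finset.sum_neg_distrib] at hsum
  linarith

private lemma rademacher_sq {ι : Type*} [Fintype ι] [DecidableEq ι] (a : ι → ℝ) :
    ∑ σ : ι → Bool, (∑ i, a i * (if σ i then (1:ℝ) else -1)) ^ 2 =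
      2 ^ (Fintype.card ι) * ∑ i, a i ^ 2 := by
  have expand : ∀ σ : ι → Bool,
      (∑ i, a i * (if σ i then (1:ℝ) else -1)) ^ 2 =
        ∑ i, ∑ j, (a i * a j) * ((if σ i then (1:ℝ) else -1) * (if σ j then 1 else -1)) := by
    intro σ
    rw [sq, Finset.sum_mul_sum]
    exact Finset.sum_congr rfl fun i _ => Finset.sum_congr rfl fun j _ => by ring
  rw [Finset.sum_congr rfl (fun σ _ => expand σ), Finset.sum_comm]
  rw [Finset.sum_congr rfl (fun i _ => Finset.sum_comm)]
  have inner : ∀ i : ι, ∑ j, ∑ σ : ι → Bool,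
      (a i * a j) * ((if σ i then (1:ℝ) else -1) * (if σ j then 1 else -1)) =
        2 ^ (Fintype.card ι) * a i ^ 2 := by
    intro i
    rw [Finset.sum_eq_single_of_mem i (Finset.mem_univ i)]
    · have : ∀ σ : ι → Bool,
          (a i * a i) * ((if σ i then (1:ℝ) else -1) * (if σ i then 1 else -1)) = a i ^ 2 := by
        intro σ; by_cases hb : σ i <;> simp [hb] <;> ring
      rw [Finset.sum_congr rfl (fun σ _ => this σ), Finset.sum_const, Finset.card_univ,
        Fintype.card_fun, Fintype.card_bool, nsmul_eq_mul]
      push_cast; ring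
    · intro j _ hj
      rw [← Finset.mul_sum, sgn_orth i j (fun hc => hj hc.symm), mul_zero]
  rw [Finset.sum_congr rfl (fun i _ => inner i), ← Finset.mul_sum]

private lemma khintchine_upper {ι : Type*} [Fintype ι] [DecidableEq ι] (a : ι → ℝ) :
    ∑ σ : ι → Bool, |∑ i, a i * (if σ i then (1:ℝ) else -1)| ≤
      2 ^ (Fintype.card ι) * Real.sqrt (∑ i, a i ^ 2) := by
  set n := Fintype.card ι
  have hQ : (0:ℝ) ≤ ∑ i, a i ^ 2 := Finset.sum_nonneg fun i _ => sq_nonneg _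
  have hCS := Finset.sum_mul_sq_le_sq_mul_sq Finset.univ
    (fun _ : ι → Bool => (1:ℝ)) (fun σ => |∑ i, a i * (if σ i then (1:ℝ) else -1)|)
  simp only [one_mul, one_pow, sq_abs, Finset.sum_const, Finset.card_univ, nsmul_eq_mul,
    mul_one] at hCS
  rw [rademacher_sq, Fintype.card_fun, Fintype.card_bool] at hCS
  have hge : (0:ℝ) ≤ ∑ σ : ι → Bool, |∑ i, a i * (if σ i then (1:ℝ) else -1)| :=
    Finset.sum_nonneg fun σ _ => abs_nonneg _
  push_cast at hCS
  refine le_of_pow_le_pow_left₀ two_ne_zero (by positivity) ?_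
  rw [mul_pow, Real.sq_sqrt hQ]
  calc (∑ σ : ι → Bool, |∑ i, a i * (if σ i then (1:ℝ) else -1)|) ^ 2
      ≤ 2 ^ n * (2 ^ n * ∑ i, a i ^ 2) := hCS
    _ = ((2:ℝ) ^ n) ^ 2 * ∑ i, a i ^ 2 := by ring

/-- Supplement A.5, upper bound for the multiple-sign update `δ^multiple`: choosing a
uniformly random `h × h` block of the fixed grid partition of the `w × w` image (`w = m·h`)
and independent Rademacher signs of magnitude `2ε` on its entries, the expectation of
`|⟨δ, v⟩|` is at most `2ε·(h/w)·‖v‖₂`. -/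
theorem multiple_sign_update_upper_bound
    (h m w : ℕ) (hh : 1 ≤ h) (hm : 1 ≤ m) (hw : w = m * h)
    (ε : ℝ) (hε : 0 < ε)
    (v : ℕ → ℕ → ℝ)
    (δ : ℕ → ℕ → (Fin h × Fin h → Bool) → ℕ → ℕ → ℝ)
    (hδ1 : ∀ (r s : ℕ) (σ : Fin h × Fin h → Bool) (k l : Fin h),
      δ r s σ (r * h + 1 + (k : ℕ)) (s * h + 1 + (l : ℕ)) =
        2 * ε * (if σ (k, l) then 1 else -1))
    (hδ0 : ∀ (r s : ℕ) (σ : Fin h × Fin h → Bool) (k l : ℕ),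
      ¬(r * h + 1 ≤ k ∧ k ≤ (r + 1) * h ∧ s * h + 1 ≤ l ∧ l ≤ (s + 1) * h) →
        δ r s σ k l = 0) :
    (1 / ((m : ℝ) ^ 2 * 2 ^ (h ^ 2))) *
        ∑ r ∈ Finset.range m, ∑ s ∈ Finset.range m, ∑ σ : Fin h × Fin h → Bool,
          |∑ k ∈ Finset.Icc 1 w, ∑ l ∈ Finset.Icc 1 w, δ r s σ k l * v k l| ≤
      2 * ε * ((h : ℝ) / (w : ℝ)) *
        Real.sqrt (∑ k ∈ Finset.Icc 1 w, ∑ l ∈ Finset.Icc 1 w, (v k l) ^ 2) := by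
  subst hw
  have hcard : Fintype.card (Fin h × Fin h) = h ^ 2 := by simp [sq]
  have hsub : ∀ t, t < m → Icc (t * h + 1) (t * h + h) ⊆ Icc 1 (m * h) := by
    intro t ht k hk
    rw [mem_Icc] at hk ⊢
    have h1 : (t + 1) * h ≤ m * h := Nat.mul_le_mul_right h ht
    have h2 : (t + 1) * h = t * h + h := by ring
    omega
  -- Step 1: rewrite the inner double sum on each block
  have key : ∀ r ∈ range m, ∀ s ∈ range m, ∀ σ : Fin h × Fin h → Bool,
      ∑ k ∈ Icc 1 (m * h), ∑ l ∈ Icc 1 (m * h), δ r s σ k l * v k l =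
        2 * ε * ∑ p : Fin h × Fin h,
          v (r * h + 1 + (p.1 : ℕ)) (s * h + 1 + (p.2 : ℕ)) * (if σ p then 1 else -1) := by
    intro r hr s hs σ
    rw [mem_range] at hr hs
    calc ∑ k ∈ Icc 1 (m * h), ∑ l ∈ Icc 1 (m * h), δ r s σ k l * v k l
        = ∑ k ∈ Icc (r * h + 1) (r * h + h), ∑ l ∈ Icc 1 (m * h), δ r s σ k l * v k l := by
          refine (Finset.sum_subset (hsub r hr) ?_).symm
          intro k _ hk'
          refine Finset.sum_eq_zero fun l _ => ?_
          rw [hδ0 r s σ k l, zero_mul]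
          rw [mem_Icc] at hk'
          have h2 : (r + 1) * h = r * h + h := by ring
          omega
      _ = ∑ k ∈ Icc (r * h + 1) (r * h + h), ∑ l ∈ Icc (s * h + 1) (s * h + h),
            δ r s σ k l * v k l := by
          refine Finset.sum_congr rfl fun k _ => ?_
          refine (Finset.sum_subset (hsub s hs) ?_).symm
          intro l _ hl'
          rw [hδ0 r s σ k l, zero_mul]
          rw [mem_Icc] at hl'
          have h2 : (s + 1) * h = s * h + h := by ring
          omega
      _ = ∑ i ∈ range h, ∑ j ∈ range h,
            δ r s σ (r * h + 1 + i) (s * h + 1 + j) * v (r * h + 1 + i) (s * h + 1 + j) := by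
          rw [sum_Icc_shift]
          exact Finset.sum_congr rfl fun i _ => by rw [sum_Icc_shift]
      _ = ∑ i : Fin h, ∑ j : Fin h,
            δ r s σ (r * h + 1 + (i : ℕ)) (s * h + 1 + (j : ℕ)) *
              v (r * h + 1 + (i : ℕ)) (s * h + 1 + (j : ℕ)) := by
          rw [← Fin.sum_univ_eq_sum_range (fun i => ∑ j ∈ range h,
            δ r s σ (r * h + 1 + i) (s * h + 1 + j) * v (r * h + 1 + i) (s * h + 1 + j)) h]
          exact Finset.sum_congr rfl fun i _ =>
            (Fin.sum_univ_eq_sum_range (fun j => δ r s σ (r * h + 1 + (i : ℕ)) (s * h + 1 + j) *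
              v (r * h + 1 + (i : ℕ)) (s * h + 1 + j)) h).symm
      _ = 2 * ε * ∑ p : Fin h × Fin h,
            v (r * h + 1 + (p.1 : ℕ)) (s * h + 1 + (p.2 : ℕ)) * (if σ p then 1 else -1) := by
          rw [Fintype.sum_prod_type, Finset.mul_sum]
          refine Finset.sum_congr rfl fun i _ => ?_
          rw [Finset.mul_sum]
          refine Finset.sum_congr rfl fun j _ => ?_
          rw [hδ1 r s σ i j]
          ring
  -- block quantity
  set Q : ℕ → ℕ → ℝ := fun r s => ∑ i ∈ range h, ∑ j ∈ range h,
    v (r * h + 1 + i) (s * h + 1 + j) ^ 2 with hQdef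
  have hQnn : ∀ r s, 0 ≤ Q r s := fun r s =>
    Finset.sum_nonneg fun i _ => Finset.sum_nonneg fun j _ => sq_nonneg _
  have hQeq : ∀ r s : ℕ, (∑ p : Fin h × Fin h,
      v (r * h + 1 + (p.1 : ℕ)) (s * h + 1 + (p.2 : ℕ)) ^ 2) = Q r s := by
    intro r s
    rw [Fintype.sum_prod_type]
    show _ = ∑ i ∈ range h, ∑ j ∈ range h, v (r * h + 1 + i) (s * h + 1 + j) ^ 2
    rw [← Fin.sum_univ_eq_sum_range (fun i =>
      ∑ j ∈ range h, v (r * h + 1 + i) (s * h + 1 + j) ^ 2) h]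
    exact Finset.sum_congr rfl fun i _ =>
      (Fin.sum_univ_eq_sum_range (fun j => v (r * h + 1 + (i : ℕ)) (s * h + 1 + j) ^ 2) h)
  -- Step 2: Khintchine bound per block
  have blockbound : ∀ r ∈ range m, ∀ s ∈ range m,
      ∑ σ : Fin h × Fin h → Bool,
          |∑ k ∈ Icc 1 (m * h), ∑ l ∈ Icc 1 (m * h), δ r s σ k l * v k l| ≤
        2 * ε * 2 ^ (h ^ 2) * Real.sqrt (Q r s) := by
    intro r hr s hs
    have hk := khintchine_upper
      (fun p : Fin h × Fin h => v (r * h + 1 + (p.1 : ℕ)) (s * h + 1 + (p.2 : ℕ)))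
    rw [hcard, hQeq r s] at hk
    calc ∑ σ : Fin h × Fin h → Bool,
          |∑ k ∈ Icc 1 (m * h), ∑ l ∈ Icc 1 (m * h), δ r s σ k l * v k l|
        = ∑ σ : Fin h × Fin h → Bool, 2 * ε *
            |∑ p : Fin h × Fin h,
              v (r * h + 1 + (p.1 : ℕ)) (s * h + 1 + (p.2 : ℕ)) * (if σ p then 1 else -1)| := by
          refine Finset.sum_congr rfl fun σ _ => ?_
          rw [key r hr s hs σ, abs_mul, abs_of_pos (by positivity : (0:ℝ) < 2 * ε)]
      _ = 2 * ε * ∑ σ : Fin h × Fin h → Bool,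
            |∑ p : Fin h × Fin h,
              v (r * h + 1 + (p.1 : ℕ)) (s * h + 1 + (p.2 : ℕ)) * (if σ p then 1 else -1)| :=
          (Finset.mul_sum _ _ _).symm
      _ ≤ 2 * ε * (2 ^ (h ^ 2) * Real.sqrt (Q r s)) :=
          mul_le_mul_of_nonneg_left hk (by positivity)
      _ = 2 * ε * 2 ^ (h ^ 2) * Real.sqrt (Q r s) := by ring
  -- Step 3: total
  have hQsum : (∑ r ∈ range m, ∑ s ∈ range m, Q r s) =
      ∑ k ∈ Icc 1 (m * h), ∑ l ∈ Icc 1 (m * h), v k l ^ 2 :=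
    block_decomp m h (fun k l => v k l ^ 2)
  set W := Real.sqrt (∑ k ∈ Icc 1 (m * h), ∑ l ∈ Icc 1 (m * h), v k l ^ 2) with hWdef
  have total : (∑ r ∈ range m, ∑ s ∈ range m, ∑ σ : Fin h × Fin h → Bool,
      |∑ k ∈ Icc 1 (m * h), ∑ l ∈ Icc 1 (m * h), δ r s σ k l * v k l|) ≤
        2 * ε * 2 ^ (h ^ 2) * ((m : ℝ) * W) := by
    calc (∑ r ∈ range m, ∑ s ∈ range m, ∑ σ : Fin h × Fin h → Bool,
        |∑ k ∈ Icc 1 (m * h), ∑ l ∈ Icc 1 (m * h), δ r s σ k l * v k l|)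
        ≤ ∑ r ∈ range m, ∑ s ∈ range m, 2 * ε * 2 ^ (h ^ 2) * Real.sqrt (Q r s) :=
          Finset.sum_le_sum fun r hr => Finset.sum_le_sum fun s hs => blockbound r hr s hs
      _ = 2 * ε * 2 ^ (h ^ 2) * ∑ r ∈ range m, ∑ s ∈ range m, Real.sqrt (Q r s) := by
          simp_rw [Finset.mul_sum]
      _ ≤ 2 * ε * 2 ^ (h ^ 2) * ((m : ℝ) * Real.sqrt (∑ r ∈ range m, ∑ s ∈ range m, Q r s)) :=
          mul_le_mul_of_nonneg_left (sum_sqrt_le m Q hQnn) (by positivity)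
      _ = 2 * ε * 2 ^ (h ^ 2) * ((m : ℝ) * W) := by rw [hQsum]
  -- Final arithmetic
  have hm0 : (0:ℝ) < (m : ℝ) := by exact_mod_cast hm
  have hh0 : (0:ℝ) < (h : ℝ) := by exact_mod_cast hh
  have hRHS : 2 * ε * ((h : ℝ) / ((m * h : ℕ) : ℝ)) * W =
      (1 / ((m : ℝ) ^ 2 * 2 ^ (h ^ 2))) * (2 * ε * 2 ^ (h ^ 2) * ((m : ℝ) * W)) := by
    push_cast
    have h2 : ((2:ℝ) ^ (h ^ 2)) ≠ 0 := by positivity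
    field_simp
  rw [hRHS]
  exact mul_le_mul_of_nonneg_left total (by positivity)
end

section
/- Let h ≥ 1 and w = m·h for an integer m ≥ 1, and let ε > 0. Partition {1, …, w} × {1, …, w} into the m² blocks B_{(r,s)} = {rh+1, …, (r+1)h} × {sh+1, …, (s+1)h} for r, s ∈ {0, …, m−1}. For a block (r,s) and signs σ ∈ {−1, 1}^{B_{(r,s)}}, let δ^{(r,s,σ)} ∈ ℝ^{w × w} equal 2ε·σ_{k,l} at each (k,l) ∈ B_{(r,s)} and 0 elsewhere. Then for every v ∈ ℝ^{w × w}, the expectation of |⟨δ, v⟩| under the uniform distribution over (r, s) and over σ ∈ {−1,1}^{h×h} satisfies E|⟨δ, v⟩| ≥ √2 · ε · (h²/w²) · ‖v‖₂. -/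
open Finset

namespace MSU
set_option linter.unusedSectionVars false

variable {I : Type*} [Fintype I] [DecidableEq I]

def sg (b : Bool) : ℝ := if b then 1 else -1

lemma sg_mul_self (b : Bool) : sg b * sg b = 1 := by cases b <;> simp [sg]

def wal (T : Finset I) (σ : I → Bool) : ℝ := ∏ i ∈ T, sg (σ i)

lemma wal_empty (σ : I → Bool) : wal (∅ : Finset I) σ = 1 := by simp [wal]

lemma wal_singleton (i : I) (σ : I → Bool) : wal {i} σ = sg (σ i) := by simp [wal]

lemma delta_sigma (σ τ : I → Bool) :
    ∑ T : Finset I, wal T σ * wal T τ =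
      if σ = τ then (2 : ℝ) ^ (Fintype.card I) else 0 := by
  have key : ∑ T : Finset I, wal T σ * wal T τ
      = ∏ i : I, (sg (σ i) * sg (τ i) + 1) := by
    rw [Fintype.prod_add (fun i => sg (σ i) * sg (τ i)) (fun _ => (1:ℝ))]
    refine Finset.sum_congr rfl fun T _ => ?_
    simp [wal, Finset.prod_mul_distrib]
  rw [key]
  by_cases hst : σ = τ
  · subst hst
    simp [sg_mul_self, Finset.prod_const, one_add_one_eq_two]
  · simp only [if_neg hst]
    obtain ⟨i, hi⟩ : ∃ i, σ i ≠ τ i := by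
      by_contra hc
      push_neg at hc
      exact hst (funext hc)
    apply Finset.prod_eq_zero (Finset.mem_univ i)
    cases hσ : σ i <;> cases hτ : τ i <;> simp_all [sg]

def cf (f : (I → Bool) → ℝ) (T : Finset I) : ℝ := ∑ σ : I → Bool, f σ * wal T σ

lemma inversion (f : (I → Bool) → ℝ) (σ : I → Bool) :
    ∑ T : Finset I, cf f T * wal T σ = 2 ^ (Fintype.card I) * f σ := by
  unfold cf
  simp only [Finset.sum_mul, mul_assoc]
  rw [Finset.sum_comm]
  have : ∀ τ : I → Bool, ∑ T : Finset I, f τ * (wal T τ * wal T σ)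
      = f τ * (if τ = σ then (2:ℝ) ^ (Fintype.card I) else 0) := by
    intro τ
    rw [← Finset.mul_sum, delta_sigma]
  simp only [this, mul_ite, mul_zero]
  rw [Finset.sum_ite_eq' Finset.univ σ (fun τ => f τ * 2 ^ (Fintype.card I))]
  simp [mul_comm]

lemma parseval (f : (I → Bool) → ℝ) :
    ∑ T : Finset I, (cf f T) ^ 2 = 2 ^ (Fintype.card I) * ∑ σ : I → Bool, (f σ) ^ 2 := by
  have : ∀ T : Finset I, (cf f T) ^ 2 = ∑ σ : I → Bool, f σ * wal T σ * cf f T := by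
    intro T
    rw [pow_two]
    rw [cf]
    rw [Finset.sum_mul]
  simp only [this]
  rw [Finset.sum_comm]
  rw [Finset.mul_sum]
  refine Finset.sum_congr rfl fun σ _ => ?_
  calc ∑ T : Finset I, f σ * wal T σ * cf f T
      = f σ * ∑ T : Finset I, cf f T * wal T σ := by
        rw [Finset.mul_sum]; refine Finset.sum_congr rfl fun T _ => by ring
    _ = f σ * (2 ^ (Fintype.card I) * f σ) := by rw [inversion]
    _ = 2 ^ (Fintype.card I) * f σ ^ 2 := by ring


def flp (i : I) (σ : I → Bool) : I → Bool := Function.update σ i (!(σ i))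

lemma flp_invol (i : I) : Function.Involutive (flp (I := I) i) := by
  intro σ
  funext j
  by_cases hj : j = i
  · subst hj
    simp [flp, Function.update]
  · simp [flp, Function.update, hj]

lemma flp_apply_ne (i j : I) (σ : I → Bool) (hj : j ≠ i) : flp i σ j = σ j := by
  simp [flp, Function.update, hj]

lemma flp_apply_eq (i : I) (σ : I → Bool) : flp i σ i = !(σ i) := by
  simp [flp]

lemma sg_not (b : Bool) : sg (!b) = - sg b := by cases b <;> simp [sg]

lemma wal_flp (T : Finset I) (i : I) (σ : I → Bool) :
    wal T (flp i σ) = (if i ∈ T then -1 else 1) * wal T σ := by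
  by_cases hi : i ∈ T
  · rw [if_pos hi]
    rw [wal, wal, ← Finset.mul_prod_erase T _ hi, ← Finset.mul_prod_erase T _ hi]
    rw [flp_apply_eq, sg_not]
    rw [Finset.prod_congr rfl (fun j hj => by
      rw [flp_apply_ne i j σ (Finset.ne_of_mem_erase hj)])]
    ring
  · rw [if_neg hi, one_mul, wal, wal]
    exact Finset.prod_congr rfl fun j hj => by
      rw [flp_apply_ne i j σ (fun hji => hi (hji ▸ hj))]

lemma cf_flp (f : (I → Bool) → ℝ) (i : I) (T : Finset I) :
    cf (fun σ => f (flp i σ)) T = (if i ∈ T then -1 else 1) * cf f T := by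
  unfold cf
  rw [Fintype.sum_bijective (flp i) (flp_invol i).bijective _
    (fun σ => f σ * ((if i ∈ T then -1 else 1) * wal T σ)) (fun σ => by
      simp only [← wal_flp]
      rw [(flp_invol i) σ])]
  rw [Finset.mul_sum]
  exact Finset.sum_congr rfl fun σ _ => by ring

/-- coefficient of the discrete derivative -/
lemma cf_sub_flp (f : (I → Bool) → ℝ) (i : I) (T : Finset I) :
    cf (fun σ => f σ - f (flp i σ)) T = (if i ∈ T then 2 * cf f T else 0) := by
  have : cf (fun σ => f σ - f (flp i σ)) T = cf f T - cf (fun σ => f (flp i σ)) T := by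
    unfold cf
    rw [← Finset.sum_sub_distrib]
    exact Finset.sum_congr rfl fun σ _ => by ring
  rw [this, cf_flp]
  by_cases hi : i ∈ T <;> simp [hi] <;> ring


def S (a : I → ℝ) (σ : I → Bool) : ℝ := ∑ i : I, a i * sg (σ i)

lemma S_neg (a : I → ℝ) (σ : I → Bool) : S a (fun i => !(σ i)) = - S a σ := by
  unfold S
  rw [← Finset.sum_neg_distrib]
  exact Finset.sum_congr rfl fun i _ => by rw [sg_not]; ring

lemma S_flp (a : I → ℝ) (i : I) (σ : I → Bool) :
    S a (flp i σ) = S a σ - 2 * a i * sg (σ i) := by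
  unfold S
  rw [← Finset.add_sum_erase _ _ (Finset.mem_univ i),
      ← Finset.add_sum_erase _ (fun j => a j * sg (σ j)) (Finset.mem_univ i)]
  rw [flp_apply_eq, sg_not]
  rw [Finset.sum_congr rfl (fun j hj => by
    rw [flp_apply_ne i j σ (Finset.ne_of_mem_erase hj)])]
  ring

lemma sum_sg_mul_sg (i j : I) :
    ∑ σ : I → Bool, sg (σ i) * sg (σ j) =
      if i = j then (2:ℝ) ^ (Fintype.card I) else 0 := by
  by_cases hij : i = j
  · subst hij
    rw [if_pos rfl]
    rw [Finset.sum_congr rfl (fun σ _ => sg_mul_self (σ i))]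
    rw [Finset.sum_const, Finset.card_univ, Fintype.card_fun]
    simp
  · rw [if_neg hij]
    have key := Fintype.sum_bijective (flp i) (flp_invol i).bijective
      (fun σ => sg ((flp i σ) i) * sg ((flp i σ) j))
      (fun σ => sg (σ i) * sg (σ j)) (fun σ => rfl)
    have key2 : ∀ σ : I → Bool, sg ((flp i σ) i) * sg ((flp i σ) j)
        = - (sg (σ i) * sg (σ j)) := by
      intro σ
      rw [flp_apply_eq, sg_not, flp_apply_ne i j σ (fun hji => hij hji.symm)]
      ring
    rw [Finset.sum_congr rfl (fun σ _ => key2 σ)] at key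
    rw [Finset.sum_neg_distrib] at key
    linarith

lemma sum_S_sq (a : I → ℝ) :
    ∑ σ : I → Bool, (S a σ) ^ 2 = 2 ^ (Fintype.card I) * ∑ i : I, a i ^ 2 := by
  have expand : ∀ σ : I → Bool, (S a σ) ^ 2
      = ∑ i : I, ∑ j : I, a i * a j * (sg (σ i) * sg (σ j)) := by
    intro σ
    rw [pow_two, S, Finset.sum_mul_sum]
    exact Finset.sum_congr rfl fun i _ => Finset.sum_congr rfl fun j _ => by ring
  simp only [expand]
  rw [Finset.sum_comm]
  have : ∀ i : I, ∑ σ : I → Bool, ∑ j : I, a i * a j * (sg (σ i) * sg (σ j))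
      = 2 ^ (Fintype.card I) * a i ^ 2 := by
    intro i
    rw [Finset.sum_comm]
    have inner : ∀ j : I, ∑ σ : I → Bool, a i * a j * (sg (σ i) * sg (σ j))
        = a i * a j * (if i = j then (2:ℝ) ^ (Fintype.card I) else 0) := by
      intro j
      rw [← Finset.mul_sum, sum_sg_mul_sg]
    simp only [inner, mul_ite, mul_zero]
    rw [Finset.sum_ite_eq Finset.univ i (fun j => a i * a j * 2 ^ (Fintype.card I))]
    simp
    ring
  rw [Finset.sum_congr rfl (fun i _ => this i), ← Finset.mul_sum]

lemma cf_singleton_even (f : (I → Bool) → ℝ)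
    (hf : ∀ σ : I → Bool, f (fun i => !(σ i)) = f σ) (i : I) :
    cf f {i} = 0 := by
  have inv : Function.Involutive (fun (σ : I → Bool) => (fun j => !(σ j))) := by
    intro σ; funext j; simp
  have key := Fintype.sum_bijective _ inv.bijective
    (fun σ => f (fun j => !(σ j)) * wal {i} (fun j => !(σ j)))
    (fun σ => f σ * wal {i} σ) (fun σ => rfl)
  have key2 : ∀ σ : I → Bool, f (fun j => !(σ j)) * wal {i} (fun j => !(σ j))
      = - (f σ * wal {i} σ) := by
    intro σ
    rw [hf σ, wal_singleton, wal_singleton, sg_not]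
    ring
  rw [Finset.sum_congr rfl (fun σ _ => key2 σ), Finset.sum_neg_distrib] at key
  have : cf f {i} = - cf f {i} := by
    unfold cf
    exact key.symm
  linarith

theorem khintchine_sq (a : I → ℝ) :
    ((2:ℝ) ^ (Fintype.card I)) ^ 2 * (∑ i : I, a i ^ 2) / 2
      ≤ (∑ σ : I → Bool, |S a σ|) ^ 2 := by
  set e : ℝ := (2:ℝ) ^ (Fintype.card I) with he
  set f : (I → Bool) → ℝ := fun σ => |S a σ| with hfdef
  have he0 : 0 < e := by positivity
  -- (1) Parseval for f
  have p1 : ∑ T : Finset I, (cf f T) ^ 2 = e ^ 2 * ∑ i : I, a i ^ 2 := by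
    rw [parseval f]
    have : ∑ σ : I → Bool, (f σ) ^ 2 = ∑ σ : I → Bool, (S a σ) ^ 2 :=
      Finset.sum_congr rfl fun σ _ => by rw [hfdef]; exact sq_abs _
    rw [this, sum_S_sq]
    ring
  -- (2) evenness
  have p2 : ∀ i : I, cf f {i} = 0 := by
    intro i
    apply cf_singleton_even
    intro σ
    rw [hfdef]
    simp only
    rw [S_neg, abs_neg]
  -- (3) derivative bound
  have p3 : ∑ T : Finset I, (T.card : ℝ) * (cf f T) ^ 2 ≤ e ^ 2 * ∑ i : I, a i ^ 2 := by
    have single : ∀ i : I,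
        ∑ T : Finset I, (if i ∈ T then (4:ℝ) * (cf f T) ^ 2 else 0)
          ≤ e ^ 2 * (4 * a i ^ 2) := by
      intro i
      have hp := parseval (fun σ => f σ - f (flp i σ))
      have lhs_eq : ∑ T : Finset I, (cf (fun σ => f σ - f (flp i σ)) T) ^ 2
          = ∑ T : Finset I, (if i ∈ T then (4:ℝ) * (cf f T) ^ 2 else 0) := by
        refine Finset.sum_congr rfl fun T _ => ?_
        rw [cf_sub_flp]
        by_cases hi : i ∈ T
        · rw [if_pos hi, if_pos hi]; ring
        · rw [if_neg hi, if_neg hi]; ring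
      have bound : ∑ σ : I → Bool, (f σ - f (flp i σ)) ^ 2 ≤ e * (4 * a i ^ 2) := by
        have each : ∀ σ : I → Bool, (f σ - f (flp i σ)) ^ 2 ≤ 4 * a i ^ 2 := by
          intro σ
          have h1 : |f σ - f (flp i σ)| ≤ |S a σ - S a (flp i σ)| := by
            rw [hfdef]
            exact abs_abs_sub_abs_le_abs_sub _ _
          have h2 : |S a σ - S a (flp i σ)| = 2 * |a i| * |sg (σ i)| := by
            rw [S_flp]
            rw [show S a σ - (S a σ - 2 * a i * sg (σ i)) = 2 * a i * sg (σ i) by ring]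
            rw [abs_mul, abs_mul]
            simp
          have h3 : |sg (σ i)| = 1 := by cases hσ : σ i <;> simp [sg]
          rw [h3, mul_one] at h2
          have h4 : |f σ - f (flp i σ)| ≤ 2 * |a i| := by rw [← h2]; exact h1
          calc (f σ - f (flp i σ)) ^ 2 = |f σ - f (flp i σ)| ^ 2 := (sq_abs _).symm
            _ ≤ (2 * |a i|) ^ 2 := by
                apply pow_le_pow_left₀ (abs_nonneg _) h4
            _ = 4 * a i ^ 2 := by rw [mul_pow, sq_abs]; ring
        calc ∑ σ : I → Bool, (f σ - f (flp i σ)) ^ 2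
            ≤ ∑ _σ : I → Bool, 4 * a i ^ 2 := Finset.sum_le_sum fun σ _ => each σ
          _ = e * (4 * a i ^ 2) := by
              rw [Finset.sum_const, Finset.card_univ, Fintype.card_fun]
              simp [he]
      calc ∑ T : Finset I, (if i ∈ T then (4:ℝ) * (cf f T) ^ 2 else 0)
          = e * ∑ σ : I → Bool, (f σ - f (flp i σ)) ^ 2 := by rw [← lhs_eq, hp]
        _ ≤ e * (e * (4 * a i ^ 2)) := by
            apply mul_le_mul_of_nonneg_left bound (le_of_lt he0)
        _ = e ^ 2 * (4 * a i ^ 2) := by ring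
    have total : ∑ i : I, ∑ T : Finset I, (if i ∈ T then (4:ℝ) * (cf f T) ^ 2 else 0)
        ≤ ∑ i : I, e ^ 2 * (4 * a i ^ 2) := Finset.sum_le_sum fun i _ => single i
    rw [Finset.sum_comm] at total
    have lhs2 : ∀ T : Finset I,
        ∑ i : I, (if i ∈ T then (4:ℝ) * (cf f T) ^ 2 else 0)
          = (T.card : ℝ) * (4 * (cf f T) ^ 2) := by
      intro T
      rw [Finset.sum_ite_mem, Finset.univ_inter, Finset.sum_const, nsmul_eq_mul]
    rw [Finset.sum_congr rfl (fun T _ => lhs2 T)] at total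
    have rhs2 : ∑ i : I, e ^ 2 * (4 * a i ^ 2) = 4 * (e ^ 2 * ∑ i : I, a i ^ 2) := by
      simp only [Finset.mul_sum]
      exact Finset.sum_congr rfl fun i _ => by ring
    rw [rhs2] at total
    have total2 : ∑ T : Finset I, 4 * ((T.card : ℝ) * (cf f T) ^ 2)
        ≤ 4 * (e ^ 2 * ∑ i : I, a i ^ 2) := by
      calc ∑ T : Finset I, 4 * ((T.card : ℝ) * (cf f T) ^ 2)
          = ∑ T : Finset I, (T.card : ℝ) * (4 * (cf f T) ^ 2) := by
            exact Finset.sum_congr rfl fun T _ => by ring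
        _ ≤ 4 * (e ^ 2 * ∑ i : I, a i ^ 2) := total
    rw [← Finset.mul_sum] at total2
    linarith
  -- (4) spectral gap
  have p4 : ∑ T : Finset I, (cf f T) ^ 2 - (cf f ∅) ^ 2
      ≤ (1 / 2) * ∑ T : Finset I, (T.card : ℝ) * (cf f T) ^ 2 := by
    have split : ∑ T : Finset I, (cf f T) ^ 2
        = (cf f ∅) ^ 2 + ∑ T ∈ Finset.univ.erase ∅, (cf f T) ^ 2 :=
      (Finset.add_sum_erase _ _ (Finset.mem_univ ∅)).symm
    have term : ∀ T ∈ Finset.univ.erase (∅ : Finset I),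
        (cf f T) ^ 2 ≤ (1 / 2) * ((T.card : ℝ) * (cf f T) ^ 2) := by
      intro T hT
      have hTne : T ≠ ∅ := Finset.ne_of_mem_erase hT
      rcases Nat.lt_or_ge T.card 2 with hc | hc
      · interval_cases hcard : T.card
        · exact absurd (Finset.card_eq_zero.mp hcard) hTne
        · obtain ⟨i, hi⟩ := Finset.card_eq_one.mp hcard
          rw [hi, p2 i]
          simp
      · have : (2:ℝ) ≤ (T.card : ℝ) := by exact_mod_cast hc
        nlinarith [sq_nonneg (cf f T)]
    have erase_le : ∑ T ∈ Finset.univ.erase (∅ : Finset I), (cf f T) ^ 2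
        ≤ (1 / 2) * ∑ T ∈ Finset.univ.erase (∅ : Finset I),
            ((T.card : ℝ) * (cf f T) ^ 2) := by
      rw [Finset.mul_sum]
      exact Finset.sum_le_sum term
    have sub_le : ∑ T ∈ Finset.univ.erase (∅ : Finset I), ((T.card : ℝ) * (cf f T) ^ 2)
        ≤ ∑ T : Finset I, (T.card : ℝ) * (cf f T) ^ 2 := by
      apply Finset.sum_le_sum_of_subset_of_nonneg (Finset.erase_subset _ _)
      intro T _ _
      positivity
    linarith
  -- combine
  have hA : cf f ∅ = ∑ σ : I → Bool, f σ := by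
    unfold cf
    exact Finset.sum_congr rfl fun σ _ => by rw [wal_empty, mul_one]
  have final : e ^ 2 * (∑ i : I, a i ^ 2) / 2 ≤ (cf f ∅) ^ 2 := by
    rw [p1] at p4
    linarith
  rw [hA] at final
  exact final


theorem khintchine_abs (a : I → ℝ) :
    (2:ℝ) ^ (Fintype.card I) * (Real.sqrt (∑ i : I, a i ^ 2) / Real.sqrt 2)
      ≤ ∑ σ : I → Bool, |S a σ| := by
  have h := khintchine_sq a
  have hnn : (0:ℝ) ≤ ∑ σ : I → Bool, |S a σ| :=
    Finset.sum_nonneg fun σ _ => abs_nonneg _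
  have hseq : (2:ℝ) ^ (Fintype.card I) * (Real.sqrt (∑ i : I, a i ^ 2) / Real.sqrt 2)
      = Real.sqrt (((2:ℝ) ^ (Fintype.card I)) ^ 2 * (∑ i : I, a i ^ 2) / 2) := by
    rw [mul_div_assoc, Real.sqrt_mul (by positivity), Real.sqrt_div (by positivity)]
    rw [Real.sqrt_sq (by positivity)]
    all_goals ring
  rw [hseq]
  calc Real.sqrt (((2:ℝ) ^ (Fintype.card I)) ^ 2 * (∑ i : I, a i ^ 2) / 2)
      ≤ Real.sqrt ((∑ σ : I → Bool, |S a σ|) ^ 2) := Real.sqrt_le_sqrt h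
    _ = ∑ σ : I → Bool, |S a σ| := Real.sqrt_sq hnn

theorem block_bound (ε : ℝ) (hε : 0 ≤ ε) (b : I → ℝ) :
    (2:ℝ) ^ (Fintype.card I) * (Real.sqrt 2 * ε * Real.sqrt (∑ i : I, b i ^ 2))
      ≤ ∑ σ : I → Bool, |∑ i : I, 2 * ε * sg (σ i) * b i| := by
  set a : I → ℝ := fun i => 2 * ε * b i with ha
  have hS : ∀ σ : I → Bool, ∑ i : I, 2 * ε * sg (σ i) * b i = S a σ := by
    intro σ
    unfold S
    exact Finset.sum_congr rfl fun i _ => by rw [ha]; ring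
  have hsum : ∑ i : I, a i ^ 2 = (2*ε) ^ 2 * ∑ i : I, b i ^ 2 := by
    rw [Finset.mul_sum]
    exact Finset.sum_congr rfl fun i _ => by rw [ha]; ring
  have hs2 : Real.sqrt 2 * Real.sqrt 2 = 2 := Real.mul_self_sqrt (by norm_num)
  have heq : Real.sqrt 2 * ε * Real.sqrt (∑ i : I, b i ^ 2)
      = Real.sqrt (∑ i : I, a i ^ 2) / Real.sqrt 2 := by
    rw [hsum, Real.sqrt_mul (by positivity), Real.sqrt_sq (by positivity)]
    rw [eq_div_iff (by positivity : Real.sqrt 2 ≠ 0)]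
    linear_combination (ε * Real.sqrt (∑ i : I, b i ^ 2)) * hs2
  rw [heq]
  simp only [hS]
  exact khintchine_abs a

theorem sqrt_sum_le {α : Type*} (s : Finset α) (f : α → ℝ) (hf : ∀ i ∈ s, 0 ≤ f i) :
    Real.sqrt (∑ i ∈ s, f i) ≤ ∑ i ∈ s, Real.sqrt (f i) := by
  have key : ∑ i ∈ s, f i ≤ (∑ i ∈ s, Real.sqrt (f i)) ^ 2 := by
    rw [pow_two, Finset.sum_mul]
    apply Finset.sum_le_sum
    intro i hi
    calc f i = Real.sqrt (f i) * Real.sqrt (f i) := (Real.mul_self_sqrt (hf i hi)).symm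
      _ ≤ Real.sqrt (f i) * ∑ j ∈ s, Real.sqrt (f j) := by
          apply mul_le_mul_of_nonneg_left _ (Real.sqrt_nonneg _)
          exact Finset.single_le_sum (fun j _ => Real.sqrt_nonneg (f j)) hi
  calc Real.sqrt (∑ i ∈ s, f i) ≤ Real.sqrt ((∑ i ∈ s, Real.sqrt (f i)) ^ 2) :=
        Real.sqrt_le_sqrt key
    _ = ∑ i ∈ s, Real.sqrt (f i) :=
        Real.sqrt_sq (Finset.sum_nonneg fun j _ => Real.sqrt_nonneg _)

theorem sum_Icc_shift (c h : ℕ) (f : ℕ → ℝ) :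
    ∑ i ∈ Finset.Icc (c+1) (c+h), f i = ∑ i ∈ Finset.range h, f (c+1+i) := by
  rw [show Finset.Icc (c+1) (c+h) = Finset.Ico (c+1) (c+h+1) by rw [Finset.Ico_add_one_right_eq_Icc]]
  rw [Finset.sum_Ico_eq_sum_range]
  have : c + h + 1 - (c + 1) = h := by omega
  rw [this]

theorem sum_Icc_partition (m h : ℕ) (f : ℕ → ℝ) :
    ∑ k ∈ Finset.Icc 1 (m*h), f k
      = ∑ r ∈ Finset.range m, ∑ i ∈ Finset.range h, f (r*h+1+i) := by
  induction m with
  | zero => simp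
  | succ m ih =>
    rw [Finset.sum_range_succ, ← ih]
    rw [show Finset.Icc 1 (m*h) = Finset.Ioc 0 (m*h) from Finset.Icc_add_one_left_eq_Ioc 0 _,
        show Finset.Icc 1 ((m+1)*h) = Finset.Ioc 0 ((m+1)*h) from Finset.Icc_add_one_left_eq_Ioc 0 _]
    rw [← Finset.sum_Ioc_consecutive f (Nat.zero_le (m*h))
      (Nat.mul_le_mul_right h (Nat.le_succ m))]
    congr 1
    rw [show Finset.Ioc (m*h) ((m+1)*h) = Finset.Icc (m*h+1) (m*h+h) by
      rw [Finset.Icc_add_one_left_eq_Ioc]; congr 1; ring]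
    exact sum_Icc_shift (m*h) h f


end MSU


open Finset

/-- Supplement A.5, lower bound for the multiple-sign update `δ^multiple`: choosing a
uniformly random `h × h` block of the fixed grid partition of the `w × w` image (`w = m·h`)
and independent Rademacher signs of magnitude `2ε` on its entries, the expectation of
`|⟨δ, v⟩|` is at least `√2·ε·(h²/w²)·‖v‖₂`. -/
theorem multiple_sign_update_lower_bound
    (h m w : ℕ) (hh : 1 ≤ h) (hm : 1 ≤ m) (hw : w = m * h)
    (ε : ℝ) (hε : 0 < ε)
    (v : ℕ → ℕ → ℝ)
    (δ : ℕ → ℕ → (Fin h × Fin h → Bool) → ℕ → ℕ → ℝ)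
    (hδ1 : ∀ (r s : ℕ) (σ : Fin h × Fin h → Bool) (k l : Fin h),
      δ r s σ (r * h + 1 + (k : ℕ)) (s * h + 1 + (l : ℕ)) =
        2 * ε * (if σ (k, l) then 1 else -1))
    (hδ0 : ∀ (r s : ℕ) (σ : Fin h × Fin h → Bool) (k l : ℕ),
      ¬(r * h + 1 ≤ k ∧ k ≤ (r + 1) * h ∧ s * h + 1 ≤ l ∧ l ≤ (s + 1) * h) →
        δ r s σ k l = 0) :
    (1 / ((m : ℝ) ^ 2 * 2 ^ (h ^ 2))) *
        ∑ r ∈ Finset.range m, ∑ s ∈ Finset.range m, ∑ σ : Fin h × Fin h → Bool,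
          |∑ k ∈ Finset.Icc 1 w, ∑ l ∈ Finset.Icc 1 w, δ r s σ k l * v k l| ≥
      Real.sqrt 2 * ε * ((h : ℝ) ^ 2 / (w : ℝ) ^ 2) *
        Real.sqrt (∑ k ∈ Finset.Icc 1 w, ∑ l ∈ Finset.Icc 1 w, (v k l) ^ 2) := by
  subst hw
  have hcard : Fintype.card (Fin h × Fin h) = h ^ 2 := by
    simp [Fintype.card_prod, pow_two]
  set Q : ℕ → ℕ → ℝ := fun r s =>
    ∑ p : Fin h × Fin h, v (r*h+1+(p.1:ℕ)) (s*h+1+(p.2:ℕ)) ^ 2 with hQ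
  have hQnn : ∀ r s, 0 ≤ Q r s := fun r s =>
    Finset.sum_nonneg fun p _ => sq_nonneg _
  -- inner double sum over the image equals the block sum
  have inner_eq : ∀ r ∈ Finset.range m, ∀ s ∈ Finset.range m,
      ∀ σ : Fin h × Fin h → Bool,
      (∑ k ∈ Finset.Icc 1 (m*h), ∑ l ∈ Finset.Icc 1 (m*h), δ r s σ k l * v k l)
        = ∑ p : Fin h × Fin h,
            2 * ε * MSU.sg (σ p) * v (r*h+1+(p.1:ℕ)) (s*h+1+(p.2:ℕ)) := by
    intro r hr s hs σ
    have hrm : r + 1 ≤ m := Finset.mem_range.mp hr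
    have hsm : s + 1 ≤ m := Finset.mem_range.mp hs
    have hrw : r*h + h ≤ m*h := by
      calc r*h + h = (r+1)*h := (Nat.succ_mul r h).symm
        _ ≤ m*h := Nat.mul_le_mul_right h hrm
    have hsw : s*h + h ≤ m*h := by
      calc s*h + h = (s+1)*h := (Nat.succ_mul s h).symm
        _ ≤ m*h := Nat.mul_le_mul_right h hsm
    have hsub1 : Finset.Icc (r*h+1) (r*h+h) ⊆ Finset.Icc 1 (m*h) := by
      intro k hk
      rw [Finset.mem_Icc] at hk ⊢
      exact ⟨le_trans (Nat.le_add_left 1 (r*h)) hk.1, le_trans hk.2 hrw⟩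
    have hsub2 : Finset.Icc (s*h+1) (s*h+h) ⊆ Finset.Icc 1 (m*h) := by
      intro l hl
      rw [Finset.mem_Icc] at hl ⊢
      exact ⟨le_trans (Nat.le_add_left 1 (s*h)) hl.1, le_trans hl.2 hsw⟩
    have restrict_k :
        (∑ k ∈ Finset.Icc 1 (m*h), ∑ l ∈ Finset.Icc 1 (m*h), δ r s σ k l * v k l)
          = ∑ k ∈ Finset.Icc (r*h+1) (r*h+h),
              ∑ l ∈ Finset.Icc 1 (m*h), δ r s σ k l * v k l := by
      symm
      apply Finset.sum_subset hsub1
      intro k _ hk2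
      apply Finset.sum_eq_zero
      intro l _
      have hz : δ r s σ k l = 0 := by
        apply hδ0
        rw [Finset.mem_Icc] at hk2
        intro hcon
        obtain ⟨h1, h2, _, _⟩ := hcon
        rw [Nat.succ_mul] at h2
        exact hk2 ⟨h1, h2⟩
      rw [hz, zero_mul]
    have restrict_l : ∀ k : ℕ,
        (∑ l ∈ Finset.Icc 1 (m*h), δ r s σ k l * v k l)
          = ∑ l ∈ Finset.Icc (s*h+1) (s*h+h), δ r s σ k l * v k l := by
      intro k
      symm
      apply Finset.sum_subset hsub2
      intro l _ hl2
      have hz : δ r s σ k l = 0 := by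
        apply hδ0
        rw [Finset.mem_Icc] at hl2
        intro hcon
        obtain ⟨_, _, h3, h4⟩ := hcon
        rw [Nat.succ_mul] at h4
        exact hl2 ⟨h3, h4⟩
      rw [hz, zero_mul]
    rw [restrict_k]
    rw [Finset.sum_congr rfl (fun k _ => restrict_l k)]
    rw [MSU.sum_Icc_shift (r*h) h
      (fun k => ∑ l ∈ Finset.Icc (s*h+1) (s*h+h), δ r s σ k l * v k l)]
    rw [Finset.sum_congr rfl (fun i (_ : i ∈ Finset.range h) =>
      MSU.sum_Icc_shift (s*h) h (fun l => δ r s σ (r*h+1+i) l * v (r*h+1+i) l))]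
    rw [Fintype.sum_prod_type]
    rw [← Fin.sum_univ_eq_sum_range (fun i =>
      ∑ j ∈ Finset.range h, δ r s σ (r*h+1+i) (s*h+1+j) * v (r*h+1+i) (s*h+1+j)) h]
    refine Finset.sum_congr rfl fun k _ => ?_
    rw [← Fin.sum_univ_eq_sum_range (fun j =>
      δ r s σ (r*h+1+(k:ℕ)) (s*h+1+j) * v (r*h+1+(k:ℕ)) (s*h+1+j)) h]
    refine Finset.sum_congr rfl fun l _ => ?_
    simp only
    rw [hδ1 r s σ k l]
    simp [MSU.sg]
  -- per-block Khintchine bound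
  have block_ge : ∀ r ∈ Finset.range m, ∀ s ∈ Finset.range m,
      (2:ℝ) ^ (h^2) * (Real.sqrt 2 * ε * Real.sqrt (Q r s))
        ≤ ∑ σ : Fin h × Fin h → Bool,
            |∑ k ∈ Finset.Icc 1 (m*h), ∑ l ∈ Finset.Icc 1 (m*h), δ r s σ k l * v k l| := by
    intro r hr s hs
    have hb := MSU.block_bound (I := Fin h × Fin h) ε (le_of_lt hε)
      (fun p => v (r*h+1+(p.1:ℕ)) (s*h+1+(p.2:ℕ)))
    rw [hcard] at hb
    calc (2:ℝ) ^ (h^2) * (Real.sqrt 2 * ε * Real.sqrt (Q r s))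
        ≤ ∑ σ : Fin h × Fin h → Bool,
            |∑ p : Fin h × Fin h,
              2 * ε * MSU.sg (σ p) * v (r*h+1+(p.1:ℕ)) (s*h+1+(p.2:ℕ))| := hb
      _ = ∑ σ : Fin h × Fin h → Bool,
            |∑ k ∈ Finset.Icc 1 (m*h), ∑ l ∈ Finset.Icc 1 (m*h), δ r s σ k l * v k l| := by
          refine Finset.sum_congr rfl fun σ _ => ?_
          rw [inner_eq r hr s hs σ]
  -- total decomposition
  have total_eq : (∑ k ∈ Finset.Icc 1 (m*h), ∑ l ∈ Finset.Icc 1 (m*h), v k l ^ 2)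
      = ∑ r ∈ Finset.range m, ∑ s ∈ Finset.range m, Q r s := by
    rw [MSU.sum_Icc_partition m h (fun k => ∑ l ∈ Finset.Icc 1 (m*h), v k l ^ 2)]
    refine Finset.sum_congr rfl fun r _ => ?_
    rw [Finset.sum_congr rfl (fun i (_ : i ∈ Finset.range h) =>
      MSU.sum_Icc_partition m h (fun l => v (r*h+1+i) l ^ 2))]
    rw [Finset.sum_comm]
    refine Finset.sum_congr rfl fun s _ => ?_
    rw [hQ]
    simp only
    rw [Fintype.sum_prod_type]
    rw [← Fin.sum_univ_eq_sum_range (fun i =>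
      ∑ j ∈ Finset.range h, v (r*h+1+i) (s*h+1+j) ^ 2) h]
    refine Finset.sum_congr rfl fun k _ => ?_
    rw [← Fin.sum_univ_eq_sum_range (fun j => v (r*h+1+(k:ℕ)) (s*h+1+j) ^ 2) h]
  -- sqrt subadditivity over blocks
  have sqrt_le : Real.sqrt (∑ r ∈ Finset.range m, ∑ s ∈ Finset.range m, Q r s)
      ≤ ∑ r ∈ Finset.range m, ∑ s ∈ Finset.range m, Real.sqrt (Q r s) := by
    calc Real.sqrt (∑ r ∈ Finset.range m, ∑ s ∈ Finset.range m, Q r s)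
        ≤ ∑ r ∈ Finset.range m, Real.sqrt (∑ s ∈ Finset.range m, Q r s) :=
          MSU.sqrt_sum_le _ _ (fun r _ => Finset.sum_nonneg fun s _ => hQnn r s)
      _ ≤ ∑ r ∈ Finset.range m, ∑ s ∈ Finset.range m, Real.sqrt (Q r s) :=
          Finset.sum_le_sum fun r _ => MSU.sqrt_sum_le _ _ (fun s _ => hQnn r s)
  -- assemble
  set A : ℝ := ∑ r ∈ Finset.range m, ∑ s ∈ Finset.range m,
      ∑ σ : Fin h × Fin h → Bool,
        |∑ k ∈ Finset.Icc 1 (m*h), ∑ l ∈ Finset.Icc 1 (m*h), δ r s σ k l * v k l| with hA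
  have hAge : (2:ℝ) ^ (h^2) * (Real.sqrt 2 * ε *
      Real.sqrt (∑ k ∈ Finset.Icc 1 (m*h), ∑ l ∈ Finset.Icc 1 (m*h), v k l ^ 2)) ≤ A := by
    rw [total_eq]
    calc (2:ℝ) ^ (h^2) * (Real.sqrt 2 * ε *
          Real.sqrt (∑ r ∈ Finset.range m, ∑ s ∈ Finset.range m, Q r s))
        ≤ (2:ℝ) ^ (h^2) * (Real.sqrt 2 * ε *
            ∑ r ∈ Finset.range m, ∑ s ∈ Finset.range m, Real.sqrt (Q r s)) := by
          apply mul_le_mul_of_nonneg_left _ (by positivity)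
          exact mul_le_mul_of_nonneg_left sqrt_le (by positivity)
      _ = ∑ r ∈ Finset.range m, ∑ s ∈ Finset.range m,
            (2:ℝ) ^ (h^2) * (Real.sqrt 2 * ε * Real.sqrt (Q r s)) := by
          simp only [Finset.mul_sum]
      _ ≤ A := by
          rw [hA]
          apply Finset.sum_le_sum
          intro r hr
          apply Finset.sum_le_sum
          intro s hs
          exact block_ge r hr s hs
  have hm0 : (0:ℝ) < (m:ℝ) := by exact_mod_cast hm
  have hh0 : (0:ℝ) < (h:ℝ) := by exact_mod_cast hh
  have hpow : (0:ℝ) < (2:ℝ) ^ (h^2) := by positivity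
  have hcoef : Real.sqrt 2 * ε * ((h : ℝ) ^ 2 / ((m*h : ℕ) : ℝ) ^ 2) *
      Real.sqrt (∑ k ∈ Finset.Icc 1 (m*h), ∑ l ∈ Finset.Icc 1 (m*h), v k l ^ 2)
      = (1 / ((m : ℝ) ^ 2 * 2 ^ (h ^ 2))) * ((2:ℝ) ^ (h^2) * (Real.sqrt 2 * ε *
          Real.sqrt (∑ k ∈ Finset.Icc 1 (m*h), ∑ l ∈ Finset.Icc 1 (m*h), v k l ^ 2))) := by
    push_cast
    field_simp
  rw [ge_iff_le, hcoef]
  apply mul_le_mul_of_nonneg_left hAge (by positivity)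
end

section
/- Let w, h, c be positive integers with h ≤ w, and index pixels by ZMod w × ZMod w (wraparound indexing). For v ∈ ℝ^{ZMod w × ZMod w × Fin c} and a window position (r, s) ∈ ZMod w × ZMod w, let V_{(r,s)} ∈ ℝ^{ZMod w × ZMod w × Fin c} agree with v at all coordinates (r+k, s+l, i) with k, l ∈ Fin h and i ∈ Fin c, and equal 0 elsewhere. Then (1/w²) · Σ_{(r,s) ∈ ZMod w × ZMod w} ‖V_{(r,s)}‖₂ ≥ (h²/w²) · ‖v‖₂. -/
/-- Supplement A.4, the Jensen-inequality step: with wraparound indexing (`ZMod w`), if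
`V_{(r,s)}` agrees with `v` on the `h × h` window at position `(r,s)` (in every channel)
and vanishes elsewhere, then the average over all window positions of `‖V_{(r,s)}‖₂` is at
least `(h²/w²)·‖v‖₂`. -/
theorem window_restriction_jensen
    (w h c : ℕ) [NeZero w] (hh : 0 < h) (hc : 0 < c) (hhw : h ≤ w)
    (v : ZMod w × ZMod w × Fin c → ℝ)
    (V : ZMod w → ZMod w → ZMod w × ZMod w × Fin c → ℝ)
    (hV1 : ∀ (r s : ZMod w) (k l : Fin h) (i : Fin c),
      V r s (r + ((k : ℕ) : ZMod w), s + ((l : ℕ) : ZMod w), i) =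
        v (r + ((k : ℕ) : ZMod w), s + ((l : ℕ) : ZMod w), i))
    (hV0 : ∀ (r s a b : ZMod w) (i : Fin c),
      (∀ k l : Fin h, ¬(a = r + ((k : ℕ) : ZMod w) ∧ b = s + ((l : ℕ) : ZMod w))) →
        V r s (a, b, i) = 0) :
    (1 / (w : ℝ) ^ 2) * ∑ r : ZMod w, ∑ s : ZMod w,
        Real.sqrt (∑ q : ZMod w × ZMod w × Fin c, (V r s q) ^ 2) ≥
      ((h : ℝ) ^ 2 / (w : ℝ) ^ 2) *
        Real.sqrt (∑ q : ZMod w × ZMod w × Fin c, (v q) ^ 2) := by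
  classical
  have hinj : Function.Injective (fun k : Fin h => ((k : ℕ) : ZMod w)) := by
    intro k k' hkk
    have hv := congrArg ZMod.val hkk
    simp only at hv
    rw [ZMod.val_cast_of_lt (lt_of_lt_of_le k.2 hhw),
        ZMod.val_cast_of_lt (lt_of_lt_of_le k'.2 hhw)] at hv
    exact Fin.ext hv
  -- indicator formula
  have hVite : ∀ (r s a b : ZMod w) (i : Fin c),
      V r s (a, b, i) =
        if (∃ k : Fin h, a = r + ((k : ℕ) : ZMod w)) ∧
           (∃ l : Fin h, b = s + ((l : ℕ) : ZMod w))
        then v (a, b, i) else 0 := by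
    intro r s a b i
    by_cases hab : (∃ k : Fin h, a = r + ((k : ℕ) : ZMod w)) ∧
        (∃ l : Fin h, b = s + ((l : ℕ) : ZMod w))
    · rw [if_pos hab]
      obtain ⟨⟨k, hk⟩, ⟨l, hl⟩⟩ := hab
      subst hk; subst hl
      exact hV1 r s k l i
    · rw [if_neg hab]
      apply hV0
      intro k l hkl
      exact hab ⟨⟨k, hkl.1⟩, ⟨l, hkl.2⟩⟩
  have hcard : ∀ a : ZMod w,
      (Finset.univ.filter (fun r : ZMod w => ∃ k : Fin h,
        a = r + ((k : ℕ) : ZMod w))).card = h := by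
    intro a
    have heq : Finset.univ.filter (fun r : ZMod w => ∃ k : Fin h,
        a = r + ((k : ℕ) : ZMod w)) =
        Finset.image (fun k : Fin h => a - ((k : ℕ) : ZMod w)) Finset.univ := by
      ext r
      simp only [Finset.mem_filter, Finset.mem_univ, true_and, Finset.mem_image]
      constructor
      · rintro ⟨k, hk⟩; exact ⟨k, by rw [hk]; ring⟩
      · rintro ⟨k, rfl⟩; exact ⟨k, by ring⟩
    have hinj2 : Function.Injective (fun k : Fin h => a - ((k : ℕ) : ZMod w)) := by
      intro k k' hkk
      apply hinj
      simpa using sub_right_injective hkk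
    rw [heq, Finset.card_image_of_injective _ hinj2, Finset.card_univ, Fintype.card_fin]
  -- sum of windows equals h^2 * v
  have hsum : ∀ q : ZMod w × ZMod w × Fin c,
      ∑ r : ZMod w, ∑ s : ZMod w, V r s q = (h : ℝ) ^ 2 * v q := by
    rintro ⟨a, b, i⟩
    have hrow : ∀ r : ZMod w, ∑ s : ZMod w, V r s (a, b, i) =
        (if ∃ k : Fin h, a = r + ((k : ℕ) : ZMod w) then (h : ℝ) * v (a, b, i) else 0) := by
      intro r
      by_cases hP : ∃ k : Fin h, a = r + ((k : ℕ) : ZMod w)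
      · rw [if_pos hP]
        have : ∀ s : ZMod w, V r s (a, b, i) =
            (if ∃ l : Fin h, b = s + ((l : ℕ) : ZMod w) then v (a, b, i) else 0) := by
          intro s
          rw [hVite]
          by_cases hQ : ∃ l : Fin h, b = s + ((l : ℕ) : ZMod w)
          · rw [if_pos ⟨hP, hQ⟩, if_pos hQ]
          · rw [if_neg (fun hand => hQ hand.2), if_neg hQ]
        simp only [this]
        rw [Finset.sum_ite, Finset.sum_const_zero, add_zero, Finset.sum_const,
          hcard b, nsmul_eq_mul]
      · rw [if_neg hP]
        apply Finset.sum_eq_zero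
        intro s _
        rw [hVite, if_neg (fun hand => hP hand.1)]
    simp only [hrow]
    rw [Finset.sum_ite, Finset.sum_const_zero, add_zero, Finset.sum_const,
      hcard a, nsmul_eq_mul]
    ring
  -- Euclidean norm
  set e : (ZMod w × ZMod w × Fin c → ℝ) ≃ₗ[ℝ]
      EuclideanSpace ℝ (ZMod w × ZMod w × Fin c) :=
    (WithLp.linearEquiv 2 ℝ (ZMod w × ZMod w × Fin c → ℝ)).symm with he
  have norm_eq : ∀ f : ZMod w × ZMod w × Fin c → ℝ,
      ‖e f‖ = Real.sqrt (∑ q : ZMod w × ZMod w × Fin c, (f q) ^ 2) := by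
    intro f
    rw [EuclideanSpace.norm_eq]
    congr 1
    refine Finset.sum_congr rfl fun q _ => ?_
    have : e f q = f q := rfl
    rw [this, Real.norm_eq_abs, sq_abs]
  have key : (h : ℝ) ^ 2 * Real.sqrt (∑ q : ZMod w × ZMod w × Fin c, (v q) ^ 2) ≤
      ∑ r : ZMod w, ∑ s : ZMod w,
        Real.sqrt (∑ q : ZMod w × ZMod w × Fin c, (V r s q) ^ 2) := by
    have hfun : (fun q => (h : ℝ) ^ 2 * v q) = ∑ r : ZMod w, ∑ s : ZMod w, V r s := by
      funext q
      simp only [Finset.sum_apply]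
      exact (hsum q).symm
    have h1 : e (fun q => (h : ℝ) ^ 2 * v q) =
        ∑ r : ZMod w, ∑ s : ZMod w, e (V r s) := by
      rw [hfun, map_sum]
      exact Finset.sum_congr rfl fun r _ => map_sum e _ _
    have h2 := norm_eq (fun q => (h : ℝ) ^ 2 * v q)
    rw [h1] at h2
    have h3 : ‖∑ r : ZMod w, ∑ s : ZMod w, e (V r s)‖ ≤
        ∑ r : ZMod w, ∑ s : ZMod w, ‖e (V r s)‖ := by
      refine le_trans (norm_sum_le _ _) ?_
      exact Finset.sum_le_sum fun r _ => norm_sum_le _ _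
    simp only [norm_eq] at h3
    rw [h2] at h3
    have h4 : Real.sqrt (∑ q : ZMod w × ZMod w × Fin c, ((h : ℝ) ^ 2 * v q) ^ 2) =
        (h : ℝ) ^ 2 * Real.sqrt (∑ q : ZMod w × ZMod w × Fin c, (v q) ^ 2) := by
      have : ∑ q : ZMod w × ZMod w × Fin c, ((h : ℝ) ^ 2 * v q) ^ 2 =
          ((h : ℝ) ^ 2) ^ 2 * ∑ q : ZMod w × ZMod w × Fin c, (v q) ^ 2 := by
        rw [Finset.mul_sum]; refine Finset.sum_congr rfl fun q _ => by ring
      rw [this, Real.sqrt_mul (by positivity), Real.sqrt_sq (by positivity)]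
    rw [h4] at h3
    exact h3
  have hw0 : (0 : ℝ) < (w : ℝ) ^ 2 := by
    have : 0 < w := Nat.pos_of_ne_zero (NeZero.ne w)
    positivity
  rw [ge_iff_le, div_mul_eq_mul_div, one_div_mul_eq_div]
  gcongr
end
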